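/- arXiv:2010.11053 — 5 statements merged into one kernel-verified Lean document; each statement's English description precedes it below -/
import Mathlib

section
/- Let (ℓ_k), (L_k) be as above with every word of L_{k+1} a concatenation of words of L_k, and suppose additionally that every concatenation of two words of L_k is a subword of a concatenation of two words of L_{k+1}. Then for every n, the concatenation of any two words of L_n is a word of the language of X = ⋂_{k≥0} ⟨L_k⟩. -/
/-- The word of length `ℓ` read in the configuration `x : ℤ → A` starting at
position `s`. -/
def blockAt {A : Type*} (x : ℤ → A) (s : ℤ) (ℓ : ℕ) : List A :=
  (List.range ℓ).map fun r => x (s + r)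

/-- The one-dimensional concatenated subshift `⟨L⟩` of a dictionary `L` of
words of length `ℓ`: configurations which, for some offset `u ∈ [0,ℓ)`, are
the infinite concatenation of words of `L` along the grid `u + ℓℤ`. -/
def concatShift {A : Type*} (L : Set (List A)) (ℓ : ℕ) : Set (ℤ → A) :=
  {x | ∃ u : ℤ, 0 ≤ u ∧ u < (ℓ : ℤ) ∧ ∀ v : ℤ, blockAt x (u + (ℓ : ℤ) * v) ℓ ∈ L}

namespace Stmt11Aux

variable {A : Type*}

/-- getD of a middle factor. -/
lemma getD_middle (g t h : List A) (d : A) {r : ℕ} (hr : r < t.length) :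
    (g ++ t ++ h).getD (g.length + r) d = t.getD r d := by
  rw [List.append_assoc]
  have h1 : g.length + r < (g ++ (t ++ h)).length := by
    simp only [List.length_append]; omega
  rw [List.getD_eq_getElem _ _ h1, List.getD_eq_getElem _ _ hr,
    List.getElem_append_right (by omega)]
  have : g.length + r - g.length = r := by omega
  simp only [this]
  exact List.getElem_append_left hr

lemma flat_len (ℓm : ℕ) (S : Set (List A)) (hS : ∀ w ∈ S, w.length = ℓm) :
    ∀ ws : List (List A), (∀ w ∈ ws, w ∈ S) → ws.flatten.length = ℓm * ws.length := by
  intro ws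
  induction ws with
  | nil => simp
  | cons w ws ih =>
    intro h
    have hw := hS w (h w (by simp))
    have := ih (fun y hy => h y (by simp [hy]))
    simp only [List.flatten_cons, List.length_append, List.length_cons, this, hw, Nat.mul_succ]
    omega

lemma flat_slice (ℓm : ℕ) (S : Set (List A)) (hS : ∀ w ∈ S, w.length = ℓm) :
    ∀ ws : List (List A), (∀ w ∈ ws, w ∈ S) → ∀ q, q < ws.length →
      ((ws.flatten.drop (ℓm * q)).take ℓm) ∈ S := by
  intro ws
  induction ws with
  | nil => simp
  | cons w ws ih =>
    intro h q hq
    have hw := h w (by simp)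
    have hwl := hS w hw
    cases q with
    | zero =>
      simp only [List.flatten_cons, Nat.mul_zero, List.drop_zero]
      rw [← hwl, List.take_left]
      exact hw
    | succ q =>
      have hmul : ℓm * (q + 1) = w.length + ℓm * q := by rw [hwl]; ring
      simp only [List.flatten_cons, hmul, List.drop_length_add_append]
      exact ih (fun y hy => h y (by simp [hy])) q (by simpa using hq)

lemma flatten_glue (Q : List A → Prop) :
    ∀ zs : List (List A), (∀ z ∈ zs, ∃ ws : List (List A), (∀ y ∈ ws, Q y) ∧ ws.flatten = z) →
      ∃ ws : List (List A), (∀ y ∈ ws, Q y) ∧ ws.flatten = zs.flatten := by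
  intro zs
  induction zs with
  | nil => exact fun _ => ⟨[], by simp, by simp⟩
  | cons z zs ih =>
    intro h
    obtain ⟨ws₁, h1, h2⟩ := h z (by simp)
    obtain ⟨ws₂, h3, h4⟩ := ih (fun y hy => h y (by simp [hy]))
    refine ⟨ws₁ ++ ws₂, ?_, ?_⟩
    · intro y hy; rcases List.mem_append.mp hy with hy | hy
      exacts [h1 y hy, h3 y hy]
    · rw [List.flatten_append, h2, h4, List.flatten_cons]

/-- Bundle of the hypotheses. -/
structure Sys (A : Type*) where
  ℓ : ℕ → ℕ
  L : ℕ → Set (List A)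
  hmono : StrictMono ℓ
  hpos : ∀ k, 0 < ℓ k
  hlen : ∀ k, ∀ w ∈ L k, w.length = ℓ k
  hconcat : ∀ k, ∀ w ∈ L (k + 1),
    ∃ ws : List (List A), (∀ v ∈ ws, v ∈ L k) ∧ ws.flatten = w
  hsub : ∀ k, ∀ u ∈ L k, ∀ v ∈ L k,
    ∃ u' ∈ L (k + 1), ∃ v' ∈ L (k + 1), (u ++ v) <:+: (u' ++ v')

lemma Sys.flatten_down (S : Sys A) :
    ∀ d m, ∀ w ∈ S.L (m + d), ∃ ws : List (List A),
      (∀ y ∈ ws, y ∈ S.L m) ∧ ws.flatten = w := by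
  intro d
  induction d with
  | zero => intro m w hw; exact ⟨[w], by simpa using hw, by simp⟩
  | succ d ih =>
    intro m w hw
    obtain ⟨zs, hzs, hflat⟩ := S.hconcat (m + d) w (by exact hw)
    obtain ⟨ws, h1, h2⟩ := flatten_glue (· ∈ S.L m) zs (fun z hz => ih m z (hzs z hz))
    exact ⟨ws, h1, by rw [h2, hflat]⟩

lemma Sys.two_le (S : Sys A) {m : ℕ} {e : List A} (he : e ∈ S.L (m + 1)) :
    2 * S.ℓ m ≤ S.ℓ (m + 1) := by
  obtain ⟨ws, h1, h2⟩ := S.hconcat m e he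
  have hlen2 : e.length = S.ℓ m * ws.length := by
    rw [← h2]; exact flat_len _ _ (S.hlen m) ws h1
  have h3 : e.length = S.ℓ (m + 1) := S.hlen _ e he
  have h4 : S.ℓ m < S.ℓ (m + 1) := S.hmono (by omega)
  have h5 := S.hpos m
  have h6 := S.hpos (m + 1)
  rcases Nat.lt_or_ge ws.length 2 with h | h
  · have : ws.length = 0 ∨ ws.length = 1 := by omega
    rcases this with h | h <;> rw [h] at hlen2 <;>
      simp only [Nat.mul_zero, Nat.mul_one] at hlen2 <;> omega
  · calc 2 * S.ℓ m = S.ℓ m * 2 := by ring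
      _ ≤ S.ℓ m * ws.length := Nat.mul_le_mul_left _ h
      _ = S.ℓ (m + 1) := by omega

lemma Sys.nonem (S : Sys A) {n : ℕ} {p : List A} (hp : p ∈ S.L n) :
    ∀ m, n ≤ m → ∃ w, w ∈ S.L m := by
  have key : ∀ d, ∃ w, w ∈ S.L (n + d) := by
    intro d
    induction d with
    | zero => exact ⟨p, hp⟩
    | succ d ih =>
      obtain ⟨w, hw⟩ := ih
      obtain ⟨w', hw', -⟩ := S.hsub (n + d) w hw w hw
      exact ⟨w', hw'⟩
  intro m hm
  obtain ⟨d, rfl⟩ := Nat.exists_eq_add_of_le hm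
  exact key d

def StepOut (S : Sys A) (m : ℕ) (cd : List A) : Prop :=
  ∃ M, m < M ∧ ∃ c' ∈ S.L M, ∃ d' ∈ S.L M, ∃ g h : List A,
    g ≠ [] ∧ h ≠ [] ∧ c' ++ d' = g ++ cd ++ h

lemma stepOut_mono {S : Sys A} {m m' : ℕ} {cd : List A} (h : m ≤ m')
    (ho : StepOut S m' cd) : StepOut S m cd := by
  obtain ⟨M, hM, rest⟩ := ho
  exact ⟨M, lt_of_le_of_lt h hM, rest⟩

lemma stepSide (S : Sys A) {n : ℕ} {p : List A} (hp : p ∈ S.L n)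
    {M : ℕ} (hM : n ≤ M) {W α cd β : List A} (hW : W ∈ S.L M)
    (hWeq : W = α ++ cd ++ β) (hside : α ≠ [] ∨ β ≠ []) : StepOut S M cd := by
  obtain ⟨G, hG⟩ := S.nonem hp M hM
  have hGne : G ≠ [] := by
    have : 0 < G.length := by rw [S.hlen M G hG]; exact S.hpos M
    exact List.length_pos_iff.mp this
  rcases hside with hα | hβ
  · obtain ⟨E, hE, F, hF, a, b, hab⟩ := S.hsub M W hW G hG
    exact ⟨M + 1, by omega, E, hE, F, hF, a ++ α, β ++ G ++ b, by simp [hα], by simp [hGne],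
      by rw [← hab, hWeq]; simp [List.append_assoc]⟩
  · obtain ⟨E, hE, F, hF, a, b, hab⟩ := S.hsub M G hG W hW
    exact ⟨M + 1, by omega, E, hE, F, hF, a ++ G ++ α, β ++ b, by simp [hGne], by simp [hβ],
      by rw [← hab, hWeq]; simp [List.append_assoc]⟩

lemma stepExact (S : Sys A) {n : ℕ} {p : List A} (hp : p ∈ S.L n)
    {M : ℕ} {cd : List A} (hM : n ≤ M) (hcd : cd ∈ S.L M) : StepOut S M cd := by
  obtain ⟨G, hG⟩ := S.nonem hp M hM
  have hGne : G ≠ [] := by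
    have : 0 < G.length := by rw [S.hlen M G hG]; exact S.hpos M
    exact List.length_pos_iff.mp this
  obtain ⟨E, hE, F, hF, a, b, hab⟩ := S.hsub M cd hcd G hG
  by_cases ha : a = []
  · have heq : cd ++ (G ++ b) = E ++ F := by rw [← hab, ha]; simp [List.append_assoc]
    have hlt : cd.length < E.length := by
      rw [S.hlen M cd hcd, S.hlen (M + 1) E hE]; exact S.hmono (by omega)
    have hpre : cd <+: E :=
      List.prefix_of_prefix_length_le ⟨G ++ b, heq⟩ (List.prefix_append E F) hlt.le
    obtain ⟨β, hβ⟩ := hpre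
    have hβne : β ≠ [] := by
      intro h
      have := congrArg List.length hβ
      simp [h] at this
      omega
    exact stepOut_mono (by omega)
      (stepSide S hp (M := M + 1) (by omega) hE (show E = [] ++ cd ++ β by rw [← hβ]; simp)
        (Or.inr hβne))
  · exact ⟨M + 1, by omega, E, hE, F, hF, a, G ++ b, ha, by simp [hGne],
      by rw [← hab]; simp [List.append_assoc]⟩

lemma stepMain (S : Sys A) {n : ℕ} {p : List A} (hp : p ∈ S.L n)
    {m : ℕ} {c d : List A} (hm : n ≤ m) (hc : c ∈ S.L m) (hd : d ∈ S.L m) :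
    StepOut S m (c ++ d) := by
  obtain ⟨E, hE, F, hF, a, b, hab⟩ := S.hsub m c hc d hd
  have h2 : 2 * S.ℓ m ≤ S.ℓ (m + 1) := S.two_le hE
  have hcdlen : (c ++ d).length = 2 * S.ℓ m := by
    rw [List.length_append, S.hlen m c hc, S.hlen m d hd]; ring
  have hElen : E.length = S.ℓ (m + 1) := S.hlen _ E hE
  have hFlen : F.length = S.ℓ (m + 1) := S.hlen _ F hF
  by_cases ha : a = []
  · have heq : (c ++ d) ++ b = E ++ F := by rw [← hab, ha]; simp
    have hpre : c ++ d <+: E :=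
      List.prefix_of_prefix_length_le ⟨b, heq⟩ (List.prefix_append E F) (by omega)
    obtain ⟨β, hβ⟩ := hpre
    by_cases hβne : β = []
    · have hmem : c ++ d ∈ S.L (m + 1) := by
        rw [show c ++ d = E from by rw [← hβ, hβne]; simp]; exact hE
      exact stepOut_mono (by omega) (stepExact S hp (by omega) hmem)
    · exact stepOut_mono (by omega)
        (stepSide S hp (by omega) hE (show E = [] ++ (c ++ d) ++ β by rw [← hβ]; simp)
          (Or.inr hβne))
  · by_cases hb : b = []
    · have heq' : a ++ (c ++ d) = E ++ F := by rw [← hab, hb]; simp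
      have hsuf : c ++ d <:+ F :=
        List.suffix_of_suffix_length_le ⟨a, heq'⟩ (List.suffix_append E F) (by omega)
      obtain ⟨α, hα⟩ := hsuf
      by_cases hαne : α = []
      · have hmem : c ++ d ∈ S.L (m + 1) := by
          rw [show c ++ d = F from by rw [← hα, hαne]; simp]; exact hF
        exact stepOut_mono (by omega) (stepExact S hp (by omega) hmem)
      · exact stepOut_mono (by omega)
          (stepSide S hp (by omega) hF (show F = α ++ (c ++ d) ++ [] by rw [← hα]; simp)
            (Or.inl hαne))
    · exact ⟨m + 1, by omega, E, hE, F, hF, a, b, ha, hb, hab.symm⟩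



section Chain

variable {A : Type*} (S : Sys A) {n : ℕ} {u v : List A}

structure CState (S : Sys A) (n : ℕ) (u v : List A) where
  M : ℕ
  c : List A
  d : List A
  a : List A
  b : List A
  hM : n ≤ M
  hc : c ∈ S.L M
  hd : d ∈ S.L M
  heq : c ++ d = a ++ (u ++ v) ++ b

lemma cstep_ex (hu : u ∈ S.L n) (p : CState S n u v) :
    ∃ q : CState S n u v, p.M < q.M ∧ ∃ g h : List A, g ≠ [] ∧ h ≠ [] ∧
      q.a = g ++ p.a ∧ q.b = p.b ++ h ∧ q.c ++ q.d = g ++ (p.c ++ p.d) ++ h := by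
  obtain ⟨M, hlt, c', hc', d', hd', g, h, hg, hh, heq⟩ := stepMain S hu p.hM p.hc p.hd
  refine ⟨⟨M, c', d', g ++ p.a, p.b ++ h, le_trans p.hM hlt.le, hc', hd', ?_⟩,
    hlt, g, h, hg, hh, rfl, rfl, heq⟩
  rw [heq, p.heq]; simp [List.append_assoc]

noncomputable def cchain (hu : u ∈ S.L n) (hv : v ∈ S.L n) : ℕ → CState S n u v :=
  fun j => (fun p => (cstep_ex S hu p).choose)^[j] ⟨n, u, v, [], [], le_rfl, hu, hv, by simp⟩

variable (hu : u ∈ S.L n) (hv : v ∈ S.L n)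

lemma cchain_zero : cchain S hu hv 0 = ⟨n, u, v, [], [], le_rfl, hu, hv, by simp⟩ := rfl

lemma cchain_succ (j : ℕ) :
    cchain S hu hv (j + 1) = (cstep_ex S hu (cchain S hu hv j)).choose :=
  Function.iterate_succ_apply' _ _ _

lemma cchain_rel (j : ℕ) :
    (cchain S hu hv j).M < (cchain S hu hv (j + 1)).M ∧ ∃ g h : List A, g ≠ [] ∧ h ≠ [] ∧
      (cchain S hu hv (j + 1)).a = g ++ (cchain S hu hv j).a ∧
      (cchain S hu hv (j + 1)).b = (cchain S hu hv j).b ++ h ∧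
      (cchain S hu hv (j + 1)).c ++ (cchain S hu hv (j + 1)).d
        = g ++ ((cchain S hu hv j).c ++ (cchain S hu hv j).d) ++ h := by
  rw [cchain_succ]
  exact (cstep_ex S hu (cchain S hu hv j)).choose_spec

noncomputable def cw (j : ℕ) : List A := (cchain S hu hv j).c ++ (cchain S hu hv j).d

noncomputable def cs (j : ℕ) : ℤ := -(((cchain S hu hv j).a.length : ℕ) : ℤ)

lemma cw_eq (j : ℕ) :
    cw S hu hv j = (cchain S hu hv j).a ++ (u ++ v) ++ (cchain S hu hv j).b :=
  (cchain S hu hv j).heq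

lemma cw_len (j : ℕ) : (cw S hu hv j).length
    = (cchain S hu hv j).a.length + (u ++ v).length + (cchain S hu hv j).b.length := by
  rw [cw_eq]; simp only [List.length_append]

lemma margins (j : ℕ) :
    j ≤ (cchain S hu hv j).a.length ∧ j ≤ (cchain S hu hv j).b.length := by
  induction j with
  | zero => simp
  | succ j ih =>
    obtain ⟨-, g, h, hg, hh, ha, hb, -⟩ := cchain_rel S hu hv j
    have hg1 : 0 < g.length := List.length_pos_iff.mpr hg
    have hh1 : 0 < h.length := List.length_pos_iff.mpr hh
    rw [ha, hb]
    simp only [List.length_append]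
    omega

lemma cM_ge (j : ℕ) : n + j ≤ (cchain S hu hv j).M := by
  induction j with
  | zero => simpa using (cchain S hu hv 0).hM
  | succ j ih =>
    have := (cchain_rel S hu hv j).1
    omega

lemma window_lb (j : ℕ) : cs S hu hv j ≤ -(j : ℤ) := by
  have := (margins S hu hv j).1
  simp only [cs]
  omega

lemma window_ub (j : ℕ) :
    ((u ++ v).length : ℤ) + j ≤ cs S hu hv j + (cw S hu hv j).length := by
  have h1 := (margins S hu hv j).2
  have h2 := cw_len S hu hv j
  simp only [cs, h2]
  push_cast
  omega

lemma val_step (dA : A) (j : ℕ) {i : ℤ} (h1 : cs S hu hv j ≤ i)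
    (h2 : i < cs S hu hv j + (cw S hu hv j).length) :
    (cw S hu hv (j + 1)).getD (i - cs S hu hv (j + 1)).toNat dA
      = (cw S hu hv j).getD (i - cs S hu hv j).toNat dA := by
  obtain ⟨-, g, h, hg, hh, ha, hb, hcd⟩ := cchain_rel S hu hv j
  have hwe : cw S hu hv (j + 1) = g ++ cw S hu hv j ++ h := by
    simp only [cw]; rw [hcd]
  have hse : cs S hu hv (j + 1) = cs S hu hv j - g.length := by
    simp only [cs]; rw [ha]; push_cast [List.length_append]; ring
  have hr : (i - cs S hu hv j).toNat < (cw S hu hv j).length := by omega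
  have hidx : (i - cs S hu hv (j + 1)).toNat = g.length + (i - cs S hu hv j).toNat := by
    omega
  rw [hwe, hidx, getD_middle _ _ _ _ hr]

lemma window_mono (j k : ℕ) :
    cs S hu hv (j + k) ≤ cs S hu hv j ∧
      cs S hu hv j + (cw S hu hv j).length
        ≤ cs S hu hv (j + k) + (cw S hu hv (j + k)).length := by
  induction k with
  | zero => exact ⟨le_rfl, le_rfl⟩
  | succ k ih =>
    obtain ⟨-, g, h, hg, hh, ha, hb, hcd⟩ := cchain_rel S hu hv (j + k)
    have hwe : cw S hu hv (j + k + 1) = g ++ cw S hu hv (j + k) ++ h := by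
      simp only [cw]; rw [hcd]
    have hse : cs S hu hv (j + k + 1) = cs S hu hv (j + k) - g.length := by
      simp only [cs]; rw [ha]; push_cast [List.length_append]; ring
    have hlen : (cw S hu hv (j + k + 1)).length
        = g.length + (cw S hu hv (j + k)).length + h.length := by
      rw [hwe]; simp only [List.length_append]
    have e1 := ih.1; have e2 := ih.2
    constructor
    · show cs S hu hv (j + k + 1) ≤ _
      omega
    · show _ ≤ cs S hu hv (j + k + 1) + ((cw S hu hv (j + k + 1)).length : ℤ)
      omega

lemma val_many (dA : A) (j k : ℕ) {i : ℤ} (h1 : cs S hu hv j ≤ i)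
    (h2 : i < cs S hu hv j + (cw S hu hv j).length) :
    (cw S hu hv (j + k)).getD (i - cs S hu hv (j + k)).toNat dA
      = (cw S hu hv j).getD (i - cs S hu hv j).toNat dA := by
  induction k with
  | zero => rfl
  | succ k ih =>
    have hw := window_mono S hu hv j k
    have hstep := val_step S hu hv dA (j + k) (i := i) (by omega) (by omega)
    rw [show j + (k + 1) = (j + k) + 1 from rfl, hstep, ih]

lemma cs_zero : cs S hu hv 0 = 0 := by simp [cs, cchain]

lemma cw_zero : cw S hu hv 0 = u ++ v := rfl

noncomputable def cx (dA : A) : ℤ → A :=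
  fun i => (cw S hu hv i.natAbs).getD ((i - cs S hu hv i.natAbs).toNat) dA

lemma cx_eq (dA : A) (huv : 0 < (u ++ v).length) (j : ℕ) {i : ℤ}
    (h1 : cs S hu hv j ≤ i) (h2 : i < cs S hu hv j + (cw S hu hv j).length) :
    cx S hu hv dA i = (cw S hu hv j).getD (i - cs S hu hv j).toNat dA := by
  set J := max j i.natAbs with hJ
  have h1' : cs S hu hv i.natAbs ≤ i := by
    have := window_lb S hu hv i.natAbs
    omega
  have h2' : i < cs S hu hv i.natAbs + (cw S hu hv i.natAbs).length := by
    have := window_ub S hu hv i.natAbs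
    omega
  have e1 := val_many S hu hv dA j (J - j) h1 h2
  have e2 := val_many S hu hv dA i.natAbs (J - i.natAbs) h1' h2'
  rw [show j + (J - j) = J from by omega] at e1
  rw [show i.natAbs + (J - i.natAbs) = J from by omega] at e2
  show (cw S hu hv i.natAbs).getD ((i - cs S hu hv i.natAbs).toNat) dA = _
  rw [← e2, e1]

lemma castlist (L : List ℕ) :
    (do let a ← L; pure ((a : ℤ))) = L.map (fun a : ℕ => (a : ℤ)) := by
  induction L with
  | nil => rfl
  | cons a L ih => simpa using ih

lemma blockAt_eq {x : ℤ → A} {t : ℤ} {l : ℕ} :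
    blockAt x t l = (List.range l).map (fun r : ℕ => x (t + (r : ℤ))) := by
  show List.map _ _ = _
  rw [castlist, List.map_map]
  rfl

lemma blockAt_length {x : ℤ → A} {t : ℤ} {l : ℕ} : (blockAt x t l).length = l := by
  rw [blockAt_eq, List.length_map, List.length_range]

lemma blockAt_getElem {x : ℤ → A} {t : ℤ} {l : ℕ} {r : ℕ} (hr : r < l) :
    (blockAt x t l)[r]'(by rw [blockAt_length]; exact hr) = x (t + r) := by
  simp only [blockAt_eq, List.getElem_map, List.getElem_range]

lemma cx_block (dA : A) (huv : 0 < (u ++ v).length) (j : ℕ) {t : ℤ} {l : ℕ}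
    (h1 : cs S hu hv j ≤ t) (h2 : t + l ≤ cs S hu hv j + (cw S hu hv j).length) :
    blockAt (cx S hu hv dA) t l = ((cw S hu hv j).drop (t - cs S hu hv j).toNat).take l := by
  have hkl : (t - cs S hu hv j).toNat + l ≤ (cw S hu hv j).length := by omega
  apply List.ext_getElem
  · rw [blockAt_length]
    simp only [List.length_take, List.length_drop]
    omega
  · intro r hr1 hr2
    have hrl : r < l := by rwa [blockAt_length] at hr1
    rw [blockAt_getElem hrl]
    rw [cx_eq S hu hv dA huv j (i := t + r) (by omega) (by omega)]
    rw [List.getElem_take, List.getElem_drop]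
    have hlt : (t - cs S hu hv j).toNat + r < (cw S hu hv j).length := by omega
    rw [List.getD_eq_getElem _ _ (by omega : (t + r - cs S hu hv j).toNat < (cw S hu hv j).length)]
    congr 1
    omega

end Chain

end Stmt11Aux

open Stmt11Aux

/-- If, in addition to the concatenation hypothesis, every concatenation of
two words of `L_k` is a subword of a concatenation of two words of `L_{k+1}`,
then for every `n` the concatenation of any two words of `L_n` belongs to the
language of `X = ⋂_k ⟨L_k⟩`, i.e. it appears in some configuration of `X`. -/
theorem stmt_11 {A : Type*} (ℓ : ℕ → ℕ) (hmono : StrictMono ℓ) (hpos : ∀ k, 0 < ℓ k)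
    (L : ℕ → Set (List A))
    (hlen : ∀ k, ∀ w ∈ L k, w.length = ℓ k)
    (hconcat : ∀ k, ∀ w ∈ L (k + 1),
      ∃ ws : List (List A), (∀ v ∈ ws, v ∈ L k) ∧ ws.flatten = w)
    (hsub : ∀ k, ∀ u ∈ L k, ∀ v ∈ L k,
      ∃ u' ∈ L (k + 1), ∃ v' ∈ L (k + 1), (u ++ v) <:+: (u' ++ v'))
    (n : ℕ) (u v : List A) (hu : u ∈ L n) (hv : v ∈ L n) :
    ∃ x ∈ ⋂ k, concatShift (L k) (ℓ k),
      ∃ s : ℤ, blockAt x s (u ++ v).length = u ++ v := by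
    classical
  set S : Sys A := ⟨ℓ, L, hmono, hpos, hlen, hconcat, hsub⟩ with hSdef
  have hu' : u ∈ S.L n := hu
  have hv' : v ∈ S.L n := hv
  have huv : 0 < (u ++ v).length := by
    rw [List.length_append, hlen n u hu]
    have := hpos n
    omega
  have hune : u ≠ [] := by
    have : 0 < u.length := by rw [hlen n u hu]; exact hpos n
    exact List.length_pos_iff.mp this
  set dA : A := u.head hune with hdA
  refine ⟨cx S hu' hv' dA, ?_, 0, ?_⟩
  · rw [Set.mem_iInter]
    intro m
    have hpm : (0 : ℤ) < (ℓ m : ℤ) := by exact_mod_cast hpos m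
    haveI : NeZero (ℓ m) := ⟨(hpos m).ne'⟩
    simp only [concatShift, Set.mem_setOf_eq]
    set Fn : ℕ → Fin (ℓ m) := fun j =>
      ⟨((cs S hu' hv' j) % ((ℓ m : ℤ))).toNat, by
        have h0 : 0 ≤ cs S hu' hv' j % (ℓ m : ℤ) := Int.emod_nonneg _ hpm.ne'
        have h1 : cs S hu' hv' j % (ℓ m : ℤ) < (ℓ m : ℤ) := Int.emod_lt_of_pos _ hpm
        omega⟩ with hFn
    obtain ⟨o, hof⟩ := Finite.exists_infinite_fiber Fn
    have hinf : (Fn ⁻¹' {o}).Infinite := Set.infinite_coe_iff.mp hof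
    refine ⟨((o : ℕ) : ℤ), by positivity, by exact_mod_cast o.isLt, ?_⟩
    intro b0
    set t : ℤ := ((o : ℕ) : ℤ) + (ℓ m : ℤ) * b0 with ht
    obtain ⟨j, hjmem, hjgt⟩ := hinf.exists_gt (m + t.natAbs + ℓ m)
    have hFj : Fn j = o := hjmem
    have hmodn : ((cs S hu' hv' j) % ((ℓ m : ℤ))).toNat = (o : ℕ) := congrArg Fin.val hFj
    have h0 : 0 ≤ cs S hu' hv' j % (ℓ m : ℤ) := Int.emod_nonneg _ hpm.ne'
    have hmod : cs S hu' hv' j % (ℓ m : ℤ) = ((o : ℕ) : ℤ) := by omega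
    have hwl := window_lb S hu' hv' j
    have hwu := window_ub S hu' hv' j
    have h1 : cs S hu' hv' j ≤ t := by omega
    have h2 : t + (ℓ m : ℤ) ≤ cs S hu' hv' j + ((cw S hu' hv' j).length : ℤ) := by omega
    rw [cx_block S hu' hv' dA huv j h1 h2]
    have hdvd : (ℓ m : ℤ) ∣ (t - cs S hu' hv' j) := by
      have holt : ((o : ℕ) : ℤ) < (ℓ m : ℤ) := by exact_mod_cast o.isLt
      have hge0 : (0 : ℤ) ≤ ((o : ℕ) : ℤ) := by positivity
      have ht1 : t % (ℓ m : ℤ) = ((o : ℕ) : ℤ) := by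
        rw [ht, Int.add_mul_emod_self_left, Int.emod_eq_of_lt hge0 holt]
      apply Int.dvd_of_emod_eq_zero
      rw [Int.sub_emod, ht1, hmod, sub_self, Int.zero_emod]
    set k : ℕ := (t - cs S hu' hv' j).toNat with hk
    have hkz : (k : ℤ) = t - cs S hu' hv' j := Int.toNat_of_nonneg (by omega)
    have hdvdn : ℓ m ∣ k := by
      have hzz : ((ℓ m : ℕ) : ℤ) ∣ (k : ℤ) := by rw [hkz]; exact hdvd
      exact_mod_cast hzz
    obtain ⟨qn, hqn⟩ := hdvdn
    have hmle : m ≤ (cchain S hu' hv' j).M := by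
      have := cM_ge S hu' hv' j
      omega
    obtain ⟨dd, hdd⟩ := Nat.exists_eq_add_of_le hmle
    obtain ⟨wsc, hwsc1, hwsc2⟩ := S.flatten_down dd m _ (hdd ▸ (cchain S hu' hv' j).hc)
    obtain ⟨wsd, hwsd1, hwsd2⟩ := S.flatten_down dd m _ (hdd ▸ (cchain S hu' hv' j).hd)
    set ws := wsc ++ wsd with hws
    have hws1 : ∀ y ∈ ws, y ∈ S.L m := by
      intro y hy
      rcases List.mem_append.mp hy with hy | hy
      exacts [hwsc1 y hy, hwsd1 y hy]
    have hws2 : ws.flatten = cw S hu' hv' j := by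
      rw [hws, List.flatten_append, hwsc2, hwsd2]; rfl
    have hlenws : (cw S hu' hv' j).length = ℓ m * ws.length := by
      rw [← hws2]; exact flat_len (ℓ m) (S.L m) (S.hlen m) ws hws1
    have hk2 : k + ℓ m ≤ (cw S hu' hv' j).length := by omega
    have hqlt : qn < ws.length := by
      have hmul : ℓ m * (qn + 1) ≤ ℓ m * ws.length := by
        rw [Nat.mul_succ]; omega
      have := Nat.le_of_mul_le_mul_left hmul (hpos m)
      omega
    have hslice := flat_slice (ℓ m) (S.L m) (S.hlen m) ws hws1 qn hqlt
    rw [hws2, ← hqn] at hslice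
    exact hslice
  · rw [cx_block S hu' hv' dA huv 0 (le_of_eq (cs_zero S hu' hv'))
      (by rw [cs_zero, cw_zero])]
    rw [cs_zero, cw_zero]
    simp
end

section
/- With (ℓ_k), (L_k) as above (every word of L_{k+1} is a concatenation of words of L_k), the nested intersection X := ⋂_{k≥0} ⟨L_k⟩ equals the subshift Σ¹(A, F) where F = ⨆_{k≥0} F_k and F_k is the set of words of length ℓ_k that are not subwords of the concatenation of two words of L_k. -/
namespace S12
variable {A : Type*}

lemma blockAt_eq (x : ℤ → A) (s : ℤ) (n : ℕ) :
    blockAt x s n = (List.range n).map (fun r : ℕ => x (s + (r:ℤ))) := by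
  show List.map _ (List.flatMap (fun a : ℕ => [(a : ℤ)]) (List.range n)) = _
  rw [← List.map_eq_flatMap, List.map_map]
  rfl

lemma length_blockAt (x : ℤ → A) (s : ℤ) (n : ℕ) : (blockAt x s n).length = n := by
  simp [blockAt_eq]

lemma blockAt_getElem (x : ℤ → A) (s : ℤ) (n i : ℕ) (h : i < (blockAt x s n).length) :
    (blockAt x s n)[i] = x (s + i) := by
  simp [blockAt_eq]

lemma blockAt_take (x : ℤ → A) (s : ℤ) {m n : ℕ} (h : m ≤ n) :
    (blockAt x s n).take m = blockAt x s m := by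
  apply List.ext_getElem
  · simp only [List.length_take, length_blockAt]; omega
  · intro i h1 h2
    rw [List.getElem_take, blockAt_getElem, blockAt_getElem]

lemma blockAt_drop (x : ℤ → A) (s : ℤ) (m n : ℕ) :
    (blockAt x s n).drop m = blockAt x (s + m) (n - m) := by
  apply List.ext_getElem
  · simp only [List.length_drop, length_blockAt]
  · intro i h1 h2
    rw [List.getElem_drop, blockAt_getElem, blockAt_getElem]
    congr 1
    push_cast
    ring

lemma blockAt_append (x : ℤ → A) (s : ℤ) (m n : ℕ) :
    blockAt x s (m + n) = blockAt x s m ++ blockAt x (s + m) n := by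
  conv_lhs => rw [← List.take_append_drop m (blockAt x s (m + n))]
  rw [blockAt_take x s (Nat.le_add_right m n), blockAt_drop, Nat.add_sub_cancel_left]

lemma blockAt_infix (x : ℤ → A) (s : ℤ) {t m n : ℕ} (h : t + m ≤ n) :
    blockAt x (s + t) m <:+: blockAt x s n := by
  have h1 : blockAt x (s + t) m = ((blockAt x s n).drop t).take m := by
    rw [blockAt_drop, blockAt_take _ _ (by omega)]
  rw [h1]
  exact ((List.take_prefix _ _).isInfix).trans ((List.drop_suffix _ _).isInfix)

lemma flatten_len (m : ℕ) : ∀ ws : List (List A), (∀ w ∈ ws, w.length = m) →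
    ws.flatten.length = ws.length * m := by
  intro ws
  induction ws with
  | nil => simp
  | cons w t ih =>
    intro h
    simp only [List.flatten_cons, List.length_append, List.length_cons,
      h w (List.mem_cons_self), ih (fun v hv => h v (List.mem_cons_of_mem _ hv))]
    ring

lemma flatten_chunk (m : ℕ) : ∀ (ws : List (List A)), (∀ w ∈ ws, w.length = m) →
    ∀ i (h : i < ws.length), (ws.flatten.drop (m * i)).take m = ws[i] := by
  intro ws
  induction ws with
  | nil => intro _ i hi; simp at hi
  | cons w t ih =>
    intro hl i hi
    have hw : w.length = m := hl w (List.mem_cons_self)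
    cases i with
    | zero =>
      simp only [Nat.mul_zero, List.drop_zero, List.flatten_cons]
      rw [List.take_append_of_le_length (by omega)]
      simp [← hw]
    | succ i =>
      have : m * (i + 1) = w.length + m * i := by rw [hw]; ring
      rw [List.flatten_cons, this, List.drop_length_add_append]
      exact ih (fun v hv => hl v (List.mem_cons_of_mem _ hv)) i (by simpa using hi)

lemma combine (Lj : Set (List A)) : ∀ ws : List (List A),
    (∀ v ∈ ws, ∃ vs : List (List A), (∀ u ∈ vs, u ∈ Lj) ∧ vs.flatten = v) →
    ∃ zs : List (List A), (∀ u ∈ zs, u ∈ Lj) ∧ zs.flatten = ws.flatten := by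
  intro ws
  induction ws with
  | nil => exact fun _ => ⟨[], by simp, by simp⟩
  | cons w t ih =>
    intro h
    obtain ⟨vs, hvs, hvfl⟩ := h w (List.mem_cons_self)
    obtain ⟨zs, hzs, hzfl⟩ := ih (fun v hv => h v (List.mem_cons_of_mem _ hv))
    refine ⟨vs ++ zs, ?_, by simp [hvfl, hzfl]⟩
    intro u hu
    rcases List.mem_append.mp hu with h' | h'
    exacts [hvs u h', hzs u h']

lemma decomp (L : ℕ → Set (List A))
    (hconcat : ∀ k, ∀ w ∈ L (k + 1),
      ∃ ws : List (List A), (∀ v ∈ ws, v ∈ L k) ∧ ws.flatten = w) :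
    ∀ (d j : ℕ), ∀ w ∈ L (j + d),
      ∃ ws : List (List A), (∀ v ∈ ws, v ∈ L j) ∧ ws.flatten = w := by
  intro d
  induction d with
  | zero => exact fun j w hw => ⟨[w], by simpa using hw, by simp⟩
  | succ d ih =>
    intro j w hw
    obtain ⟨ws, hws, hfl⟩ := hconcat (j + d) w hw
    obtain ⟨zs, hzs, hzfl⟩ := combine (L j) ws (fun v hv => ih j v (hws v hv))
    exact ⟨zs, hzs, by rw [hzfl, hfl]⟩

end S12

open S12

/-- Under the concatenation hypothesis, the nested intersection
`X = ⋂_k ⟨L_k⟩` equals the subshift `Σ¹(A, F)` where `F = ⋃_k F_k` and `F_k`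
is the set of words of length `ℓ_k` that are not subwords of a concatenation
of two words of `L_k`. -/
theorem stmt_12 {A : Type*} (ℓ : ℕ → ℕ) (hmono : StrictMono ℓ) (hpos : ∀ k, 0 < ℓ k)
    (L : ℕ → Set (List A))
    (hlen : ∀ k, ∀ w ∈ L k, w.length = ℓ k)
    (hconcat : ∀ k, ∀ w ∈ L (k + 1),
      ∃ ws : List (List A), (∀ v ∈ ws, v ∈ L k) ∧ ws.flatten = w) :
    (⋂ k, concatShift (L k) (ℓ k)) =
      {x : ℤ → A | ∀ (k : ℕ) (w : List A), w.length = ℓ k →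
        (¬ ∃ u ∈ L k, ∃ v ∈ L k, w <:+: (u ++ v)) →
        ∀ s : ℤ, blockAt x s (ℓ k) ≠ w} := by
  ext x
  simp only [Set.mem_iInter, Set.mem_setOf_eq]
  constructor
  · -- forward direction
    intro h k w hwl hno s hws
    obtain ⟨u, hu0, hul, hb⟩ := h k
    have hm : (0:ℤ) < (ℓ k : ℤ) := by exact_mod_cast hpos k
    set v : ℤ := (s - u) / (ℓ k : ℤ) with hv
    set a : ℤ := u + (ℓ k : ℤ) * v with ha
    have hd : (s - u) % (ℓ k : ℤ) = (s - u) - (ℓ k : ℤ) * v := Int.emod_def _ _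
    have hd0 : (0:ℤ) ≤ (s - u) % (ℓ k : ℤ) := Int.emod_nonneg _ (ne_of_gt hm)
    have hd1 : (s - u) % (ℓ k : ℤ) < (ℓ k : ℤ) := Int.emod_lt_of_pos _ hm
    have h1 : a ≤ s := by rw [ha]; linarith
    have h2 : s < a + (ℓ k : ℤ) := by rw [ha]; linarith
    set t : ℕ := (s - a).toNat with htd
    have ht : (t : ℤ) = s - a := Int.toNat_of_nonneg (by linarith)
    apply hno
    refine ⟨blockAt x a (ℓ k), hb v, blockAt x (a + (ℓ k : ℤ)) (ℓ k), ?_, ?_⟩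
    · have := hb (v + 1)
      rwa [show u + (ℓ k : ℤ) * (v + 1) = a + (ℓ k : ℤ) from by rw [ha]; ring] at this
    · rw [← hws]
      have hsa : s = a + (t : ℤ) := by omega
      have htl : t + ℓ k ≤ ℓ k + ℓ k := by omega
      have key := blockAt_infix x a (m := ℓ k) (n := ℓ k + ℓ k) (t := t) htl
      rw [blockAt_append] at key
      rwa [hsa]
  · -- reverse direction
    intro hx j
    have hm : 0 < ℓ j := hpos j
    have hmz : (0:ℤ) < (ℓ j : ℤ) := by exact_mod_cast hm
    set m := ℓ j with hmd
    have perN : ∀ n : ℕ, ∃ u : ℕ, u < m ∧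
        ∀ v : ℤ, -(n:ℤ) ≤ v → v ≤ (n:ℤ) →
          blockAt x ((u:ℤ) + (m:ℤ) * v) m ∈ L j := by
      intro n
      set k := j + m * (2*n+2) with hk
      have hlk : m * (2*n+2) ≤ ℓ k := le_trans (Nat.le_add_left _ j) hmono.le_apply
      have hlkz : ((m * (2*n+2) : ℕ) : ℤ) ≤ (ℓ k : ℤ) := by exact_mod_cast hlk
      set s : ℤ := -(n:ℤ) * m with hs
      have hex : ∃ u' ∈ L k, ∃ v' ∈ L k, blockAt x s (ℓ k) <:+: u' ++ v' := by
        by_contra hcon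
        exact hx k (blockAt x s (ℓ k)) (length_blockAt x s (ℓ k)) hcon s rfl
      obtain ⟨u', hu', v', hv', p, q, hpq⟩ := hex
      obtain ⟨ws1, hws1, hf1⟩ := decomp L hconcat (m * (2*n+2)) j u' hu'
      obtain ⟨ws2, hws2, hf2⟩ := decomp L hconcat (m * (2*n+2)) j v' hv'
      set ws := ws1 ++ ws2 with hwsd
      have hws : ∀ v ∈ ws, v ∈ L j := by
        intro v hv
        rcases List.mem_append.mp hv with h' | h'
        exacts [hws1 v h', hws2 v h']
      have hflat : ws.flatten = u' ++ v' := by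
        rw [hwsd, List.flatten_append, hf1, hf2]
      have hwlen : ∀ v ∈ ws, v.length = m := fun v hv => hlen j v (hws v hv)
      have hlenf : ws.flatten.length = ws.length * m := flatten_len m ws hwlen
      have hlen2 : ws.flatten.length = p.length + ℓ k + q.length := by
        rw [hflat, ← hpq]
        simp [length_blockAt]
        omega
      set c : ℤ := s - p.length with hc
      have huo0 : (0:ℤ) ≤ c % m := Int.emod_nonneg _ (ne_of_gt hmz)
      have huom : c % m < (m:ℤ) := Int.emod_lt_of_pos _ hmz
      refine ⟨(c % m).toNat, by omega, ?_⟩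
      intro v hv1 hv2
      rw [Int.toNat_of_nonneg huo0]
      set iz : ℤ := v - c / m with hizd
      have hkey : c + (m:ℤ) * iz = c % m + m * v := by
        rw [hizd, Int.emod_def]; ring
      have hbound1 : (m:ℤ) * (-(n:ℤ)) ≤ m * v := by
        apply mul_le_mul_of_nonneg_left hv1 (le_of_lt hmz)
      have hbound2 : (m:ℤ) * v ≤ m * n := by
        apply mul_le_mul_of_nonneg_left hv2 (le_of_lt hmz)
      have hpos1 : s ≤ c % m + m * v := by rw [hs]; linarith
      have hpos2 : c % m + m * v + m ≤ s + ℓ k := by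
        rw [hs]
        push_cast at hlkz ⊢
        linarith
      have hplz : (0:ℤ) ≤ (p.length : ℤ) := Int.natCast_nonneg _
      have hmi : (m:ℤ) * iz = (c % m + m * v) - c := by linarith
      have hiz0 : 0 ≤ iz := by
        by_contra hcon
        push_neg at hcon
        have : (m:ℤ) * iz < 0 := mul_neg_of_pos_of_neg hmz hcon
        rw [hc] at hmi
        linarith
      set i : ℕ := iz.toNat with hid
      have hic : (i : ℤ) = iz := Int.toNat_of_nonneg hiz0
      have hA : p.length ≤ m * i := by
        have : (p.length : ℤ) ≤ (m:ℤ) * i := by rw [hic, hmi, hc]; linarith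
        exact_mod_cast this
      have hBz : (m:ℤ) * i + m ≤ (p.length : ℤ) + ℓ k := by
        rw [hic, hmi, hc]; linarith
      have hB : m * i + m ≤ p.length + ℓ k := by exact_mod_cast hBz
      have hiws : i < ws.length := by
        have h1 : ((i:ℤ) + 1) * m ≤ (ws.length : ℤ) * m := by
          have hq := hlenf
          rw [hlen2] at hq
          have hqz : ((p.length + ℓ k + q.length : ℕ) : ℤ) = ((ws.length * m : ℕ) : ℤ) := by exact_mod_cast hq
          push_cast at hqz hBz
          linarith
        have h2 : (i:ℤ) + 1 ≤ ws.length := le_of_mul_le_mul_right h1 hmz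
        exact_mod_cast h2
      have e1 : (ws.flatten.drop (m * i)).take m = ws[i] := flatten_chunk m ws hwlen i hiws
      have e2 : ws.flatten = p ++ (blockAt x s (ℓ k) ++ q) := by
        rw [hflat, ← hpq, List.append_assoc]
      set t : ℕ := m * i - p.length with htd
      have htmi : m * i = p.length + t := by omega
      rw [e2, htmi, List.drop_length_add_append] at e1
      have htb : t ≤ (blockAt x s (ℓ k)).length := by rw [length_blockAt]; omega
      rw [List.drop_append_of_le_length htb, blockAt_drop] at e1
      have htm2 : m ≤ ℓ k - t := by omega
      have htm : m ≤ (blockAt x (s + t) (ℓ k - t)).length := by rw [length_blockAt]; omega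
      rw [List.take_append_of_le_length htm, blockAt_take _ _ htm2] at e1
      have hst : s + (t:ℤ) = c % m + m * v := by
        have htz : (t:ℤ) = (m:ℤ) * i - p.length := by
          rw [show (m:ℤ) * i = ((m * i : ℕ) : ℤ) from by push_cast; ring, htmi]
          push_cast; ring
        rw [htz, hic, hmi, hc]; ring
      rw [← hst, e1]
      exact hws _ (List.getElem_mem hiws)
    -- pigeonhole
    choose g hg1 hg2 using perN
    have : Nonempty (Fin m) := ⟨⟨0, hm⟩⟩
    obtain ⟨u, hu⟩ := Finite.exists_infinite_fiber (fun n => (⟨g n, hg1 n⟩ : Fin m))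
    have hinf : ((fun n => (⟨g n, hg1 n⟩ : Fin m)) ⁻¹' {u}).Infinite := Set.infinite_coe_iff.mp hu
    refine ⟨((u : ℕ) : ℤ), Int.natCast_nonneg _, by exact_mod_cast u.isLt, fun v => ?_⟩
    obtain ⟨n, hn1, hn2⟩ := hinf.exists_gt v.natAbs
    have hfn : g n = (u : ℕ) := congrArg Fin.val hn1
    have := hg2 n v (by omega) (by omega)
    rwa [hfn] at this
end

section
/- In the iterative construction, for k ≥ 2 even, two copies of a_k = a_{k-1} 1^{(N_k-2)ℓ_{k-1}} a_{k-1} can only overlap so that the shift s satisfies s ≥ (N_k - 1)ℓ_{k-1}; i.e., the initial copy of a_{k-1} of one word overlaps the terminal copy of a_{k-1} of the other. -/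
/-- The lengths `ℓ_k` of the blocks in the iterative construction:
`ℓ_0 = 2`, `ℓ_k = N_k · ℓ_{k-1}`. -/
def lenSeq (N : ℕ → ℕ) : ℕ → ℕ
  | 0 => 2
  | k + 1 => N (k + 1) * lenSeq N (k)

/-- The blocks `a_k` over the alphabet `{0,1,2}` (encoded as `Fin 3`):
`a_0 = 01`; for `k` odd `a_k = (a_{k-1})^{N_k}`, and for `k ≥ 2` even
`a_k = a_{k-1} 1^{(N_k-2)ℓ_{k-1}} a_{k-1}`. -/
def wordA (N : ℕ → ℕ) : ℕ → List (Fin 3)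
  | 0 => [0, 1]
  | k + 1 =>
    if (k + 1) % 2 = 1 then
      (List.replicate (N (k + 1)) (wordA N k)).flatten
    else
      wordA N k ++ List.replicate ((N (k + 1) - 2) * lenSeq N k) 1 ++ wordA N k

/-- The blocks `b_k` over `{0,1,2}`: `b_0 = 02`; for `k` odd
`b_k = b_{k-1} 2^{(N_k-2)ℓ_{k-1}} b_{k-1}`, and for `k ≥ 2` even
`b_k = (b_{k-1})^{N_k}`. -/
def wordB (N : ℕ → ℕ) : ℕ → List (Fin 3)
  | 0 => [0, 2]
  | k + 1 =>
    if (k + 1) % 2 = 1 then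
      wordB N k ++ List.replicate ((N (k + 1) - 2) * lenSeq N k) 2 ++ wordB N k
    else
      (List.replicate (N (k + 1)) (wordB N k)).flatten

/-- Two words `u`, `v` overlap if some proper nonempty terminal segment of `u`
coincides with the initial segment of `v` of the same length (shift
`0 < s < |u|`; full coincidence is excluded). -/
def Overlap {A : Type*} (u v : List A) : Prop :=
  ∃ s : ℕ, 0 < s ∧ s < u.length ∧ u.drop s = v.take (u.length - s)

lemma lenA (N : ℕ → ℕ) (hN : ∀ k, 1 ≤ k → 4 ≤ N k) :
    ∀ m, (wordA N m).length = lenSeq N m := by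
  intro m
  induction m with
  | zero => rfl
  | succ m ih =>
    have h4 : 4 ≤ N (m+1) := hN _ (by omega)
    obtain ⟨c, hc⟩ : ∃ c, N (m+1) = c + 4 := ⟨N (m+1) - 4, by omega⟩
    have h2 : N (m+1) - 2 = c + 2 := by omega
    rw [wordA]
    split
    · simp [List.length_flatten, List.map_replicate, ih, lenSeq]
    · rw [h2]
      simp only [List.length_append, List.length_replicate, ih, lenSeq, hc]
      ring

lemma headA (N : ℕ → ℕ) (hN : ∀ k, 1 ≤ k → 4 ≤ N k) :
    ∀ m, ∃ t, wordA N m = 0 :: t := by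
  intro m
  induction m with
  | zero => exact ⟨[1], rfl⟩
  | succ m ih =>
    obtain ⟨t, ht⟩ := ih
    have h4 : 4 ≤ N (m+1) := hN _ (by omega)
    obtain ⟨c, hc⟩ : ∃ c, N (m+1) = c + 1 := ⟨N (m+1) - 1, by omega⟩
    rw [wordA]
    split
    · rw [hc, List.replicate_succ, List.flatten_cons, ht]
      exact ⟨t ++ (List.replicate c (0 :: t)).flatten, by simp⟩
    · rw [ht]
      exact ⟨t ++ List.replicate ((N (m+1) - 2) * lenSeq N m) 1 ++ (0 :: t), by simp⟩

lemma lenSeq_ge2 (N : ℕ → ℕ) (hN : ∀ k, 1 ≤ k → 4 ≤ N k) :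
    ∀ m, 2 ≤ lenSeq N m := by
  intro m
  induction m with
  | zero => rfl
  | succ m ih =>
    have h4 : 4 ≤ N (m+1) := hN _ (by omega)
    have : 1 * lenSeq N m ≤ N (m+1) * lenSeq N m :=
      Nat.mul_le_mul_right _ (by omega)
    simp only [lenSeq]
    omega

/-- For `k ≥ 2` even, two copies of `a_k = a_{k-1} 1^{(N_k-2)ℓ_{k-1}} a_{k-1}`
can only overlap with shift `s ≥ (N_k - 1)·ℓ_{k-1}`, i.e. the initial copy of
`a_{k-1}` of one word overlaps the terminal copy of `a_{k-1}` of the other. -/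
theorem stmt_14 (N : ℕ → ℕ) (hN : ∀ k, 1 ≤ k → 4 ≤ N k)
    (k : ℕ) (hk : 2 ≤ k) (hke : Even k) (s : ℕ)
    (hs0 : 0 < s) (hs1 : s < lenSeq N k)
    (hov : (wordA N k).drop s = (wordA N k).take (lenSeq N k - s)) :
    (N k - 1) * lenSeq N (k - 1) ≤ s := by
  obtain ⟨m, rfl⟩ : ∃ m, k = m + 1 := ⟨k - 1, by omega⟩
  simp only [Nat.add_sub_cancel] at *
  set ℓ := lenSeq N m with hℓdef
  set Nk := N (m+1) with hNkdef
  have h4 : 4 ≤ Nk := hN _ (by omega)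
  obtain ⟨c, hc⟩ : ∃ c, Nk = c + 4 := ⟨Nk - 4, by omega⟩
  have hmod : ¬ (m + 1) % 2 = 1 := by
    rw [Nat.even_iff] at hke; omega
  have hw : wordA N (m+1) = wordA N m ++ List.replicate ((Nk-2)*ℓ) 1 ++ wordA N m := by
    rw [wordA, if_neg hmod]
  have hlenm : (wordA N m).length = ℓ := lenA N hN m
  have hL : lenSeq N (m+1) = Nk * ℓ := rfl
  have hℓpos : 2 ≤ ℓ := lenSeq_ge2 N hN m
  obtain ⟨t, ht⟩ := headA N hN m
  have e1 : (Nk-1)*ℓ + ℓ = Nk*ℓ := by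
    rw [show Nk - 1 = c + 3 by omega, hc]; ring
  have e2 : ℓ + (Nk-2)*ℓ = (Nk-1)*ℓ := by
    rw [show Nk - 2 = c + 2 by omega, show Nk - 1 = c + 3 by omega]; ring
  have e3 : 2*ℓ ≤ (Nk-1)*ℓ := Nat.mul_le_mul_right _ (by omega)
  have hmidlen : ((wordA N m) ++ List.replicate ((Nk-2)*ℓ) 1).length = (Nk-1)*ℓ := by
    simp [hlenm]; omega
  have hzero : (wordA N (m+1))[(0:ℕ)]? = some 0 := by
    rw [hw, ht]; simp
  have hmid : ∀ j, ℓ ≤ j → j < (Nk-1)*ℓ → (wordA N (m+1))[j]? = some 1 := by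
    intro j hj1 hj2
    rw [hw, List.append_assoc,
      List.getElem?_append_right (by omega : (wordA N m).length ≤ j),
      hlenm, List.getElem?_append, if_pos (by simp; omega), List.getElem?_replicate,
      if_pos (by omega)]
  have hsecond : (wordA N (m+1))[(Nk-1)*ℓ]? = some 0 := by
    rw [hw, List.getElem?_append_right (by omega : _ ≤ (Nk-1)*ℓ), hmidlen, ht]
    simp
  rw [hL] at hov hs1
  have key : ∀ i, i < Nk*ℓ - s → (wordA N (m+1))[s+i]? = (wordA N (m+1))[i]? := by
    intro i hi
    have h := congrArg (fun l => l[i]?) hov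
    simp only [List.getElem?_drop, List.getElem?_take] at h
    rw [if_pos hi] at h
    exact h
  have h0 : (wordA N (m+1))[s]? = some 0 := by
    have := key 0 (by omega)
    simpa [hzero] using this
  by_contra hcon
  push_neg at hcon
  rcases lt_or_ge s ℓ with hsl | hsl
  · have hk2 := key ((Nk-1)*ℓ - s) (by omega)
    rw [show s + ((Nk-1)*ℓ - s) = (Nk-1)*ℓ by omega, hsecond,
      hmid ((Nk-1)*ℓ - s) (by omega) (by omega)] at hk2
    exact absurd hk2 (by decide)
  · rw [hmid s hsl hcon] at h0
    exact absurd h0 (by decide)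
end

section
/- Let k ≥ 0 and let ν be an ergodic shift-invariant probability measure on Σ²(A) with supp(ν) ⊆ ⟨L_k⟩, where L_k ⊆ A^{[1,ℓ_k]²} is a dictionary of globally admissible square patterns for a subshift X defined by forbidden patterns F ⊆ A^{[1,D]²}. Then ν(F̄) ≤ 2D/ℓ_k, where F̄ = [F] is the union of cylinders of F at the origin. -/
open MeasureTheory
open scoped ENNReal NNReal

/-- Bidimensional configurations over the alphabet `A`. -/
abbrev Config2 (A : Type*) := (ℤ × ℤ) → A

/-- The shift action on `A^(ℤ²)`: `(σᵘ x) v = x (u + v)`. -/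
def shiftC {A : Type*} (u : ℤ × ℤ) (x : Config2 A) : Config2 A :=
  fun v => x (u.1 + v.1, u.2 + v.2)

/-- The `m × m` square pattern read in `x` on the box `[1,m]²` (a position
`q : Fin m × Fin m` encodes the lattice point `(q₁ + 1, q₂ + 1)`). -/
def patternAt {A : Type*} {m : ℕ} (x : Config2 A) : (Fin m × Fin m) → A :=
  fun q => x ((q.1 : ℤ) + 1, (q.2 : ℤ) + 1)

/-- The cylinder generated by a set `P` of `m × m` square patterns. -/
def cylOf {A : Type*} {m : ℕ} (P : Set ((Fin m × Fin m) → A)) : Set (Config2 A) :=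
  {x | patternAt x ∈ P}

/-- The bidimensional concatenated subshift `⟨L⟩` of a dictionary `L` of
`ℓ × ℓ` square patterns. -/
def concat2 {A : Type*} {ℓ : ℕ} (L : Set ((Fin ℓ × Fin ℓ) → A)) : Set (Config2 A) :=
  {x | ∃ u : ℤ × ℤ, 0 ≤ u.1 ∧ u.1 < (ℓ : ℤ) ∧ 0 ≤ u.2 ∧ u.2 < (ℓ : ℤ) ∧
    ∀ v : ℤ × ℤ, shiftC (u.1 + (ℓ : ℤ) * v.1, u.2 + (ℓ : ℤ) * v.2) x ∈ cylOf L}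

/-- Every measurable subset of the product space `A^(ℤ²)` only depends on a
countable family of measurable sets of `A`. -/
lemma Stmt16.exists_sep {A : Type*} [MeasurableSpace A] (M : Set (Config2 A))
    (hM : MeasurableSet M) :
    ∃ C : Set (Set A), C.Countable ∧ (∀ G ∈ C, MeasurableSet G) ∧
      ∀ x y : Config2 A, (∀ (v : ℤ × ℤ), ∀ G ∈ C, (x v ∈ G ↔ y v ∈ G)) → (x ∈ M ↔ y ∈ M) := by
  classical
  let P : Set (Config2 A) → Prop := fun W => ∃ C : Set (Set A), C.Countable ∧
    (∀ G ∈ C, MeasurableSet G) ∧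
    ∀ x y : Config2 A, (∀ (v : ℤ × ℤ), ∀ G ∈ C, (x v ∈ G ↔ y v ∈ G)) → (x ∈ W ↔ y ∈ W)
  let m' : MeasurableSpace (Config2 A) :=
    { MeasurableSet' := P
      measurableSet_empty := ⟨∅, Set.countable_empty, by simp, fun x y _ => Iff.rfl⟩
      measurableSet_compl := by
        rintro s ⟨C, hc, hm, hsep⟩
        exact ⟨C, hc, hm, fun x y h => not_congr (hsep x y h)⟩
      measurableSet_iUnion := by
        intro f hf
        refine ⟨⋃ i, (hf i).choose, Set.countable_iUnion (fun i => (hf i).choose_spec.1),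
          ?_, ?_⟩
        · intro G hG
          obtain ⟨i, hGi⟩ := Set.mem_iUnion.mp hG
          exact (hf i).choose_spec.2.1 G hGi
        · intro x y h
          simp only [Set.mem_iUnion]
          refine exists_congr fun i => ?_
          exact (hf i).choose_spec.2.2 x y
            (fun v G hG => h v G (Set.mem_iUnion.mpr ⟨i, hG⟩)) }
  have hle : (MeasurableSpace.pi : MeasurableSpace (Config2 A)) ≤ m' := by
    refine iSup_le fun v => ?_
    intro s hs
    obtain ⟨G, hG, rfl⟩ := hs
    exact ⟨{G}, Set.countable_singleton G, by simpa using hG,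
      fun x y h => h v G rfl⟩
  exact hle M hM

/-- In a configuration of the concatenated subshift `⟨L⟩` of a dictionary of
globally admissible patterns, every occurrence of a forbidden pattern must
straddle the grid. -/
lemma Stmt16.occ_straddle {A : Type*} {D ℓ : ℕ} (hD : 0 < D) (hDl : D ≤ ℓ)
    {F : Set ((Fin D × Fin D) → A)} {L : Set ((Fin ℓ × Fin ℓ) → A)}
    (hL : ∀ w ∈ L, ∃ x : Config2 A,
      (∀ u : ℤ × ℤ, shiftC u x ∉ cylOf F) ∧ patternAt x = w)
    {y : Config2 A} (hy : y ∈ concat2 L) :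
    ∃ u : ℤ × ℤ, 0 ≤ u.1 ∧ u.1 < (ℓ : ℤ) ∧ 0 ≤ u.2 ∧ u.2 < (ℓ : ℤ) ∧
      ∀ s : ℤ × ℤ, patternAt (shiftC s y) ∈ F →
        ((ℓ:ℤ) - D < (s.1 - u.1) % ℓ ∨ (ℓ:ℤ) - D < (s.2 - u.2) % ℓ) := by
  obtain ⟨u, hu1, hu2, hu3, hu4, hu⟩ := hy
  refine ⟨u, hu1, hu2, hu3, hu4, fun s hs => ?_⟩
  by_contra hcon
  push_neg at hcon
  obtain ⟨h1, h2⟩ := hcon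
  have hl0 : (0:ℤ) < ℓ := by
    have : (0:ℤ) < D := by exact_mod_cast hD
    have h' : (D:ℤ) ≤ ℓ := by exact_mod_cast hDl
    linarith
  have hlne : ℓ ≠ 0 := by omega
  set r1 := (s.1 - u.1) % ℓ with hr1def
  set r2 := (s.2 - u.2) % ℓ with hr2def
  set k1 := (s.1 - u.1) / ℓ with hk1def
  set k2 := (s.2 - u.2) / ℓ with hk2def
  have e1 : u.1 + (ℓ:ℤ) * k1 + r1 = s.1 := by
    have h := Int.mul_ediv_add_emod (s.1 - u.1) (ℓ:ℤ)
    rw [hk1def, hr1def]; linarith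
  have e2 : u.2 + (ℓ:ℤ) * k2 + r2 = s.2 := by
    have h := Int.mul_ediv_add_emod (s.2 - u.2) (ℓ:ℤ)
    rw [hk2def, hr2def]; linarith
  have hr1n : 0 ≤ r1 := Int.emod_nonneg _ (ne_of_gt hl0)
  have hr2n : 0 ≤ r2 := Int.emod_nonneg _ (ne_of_gt hl0)
  have hw := hu (k1, k2)
  obtain ⟨z, hzF, hzp⟩ := hL _ hw
  apply hzF (r1, r2)
  show patternAt (shiftC (r1, r2) z) ∈ F
  have hq1b : ∀ q : Fin D, (r1 + (q : ℤ)).toNat < ℓ := by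
    intro q
    rw [Int.toNat_lt' (Nat.pos_of_ne_zero hlne)]
    have : ((q : ℕ) : ℤ) < D := by exact_mod_cast q.isLt
    have hD' : (D:ℤ) ≤ ℓ := by exact_mod_cast hDl
    linarith
  have hq2b : ∀ q : Fin D, (r2 + (q : ℤ)).toNat < ℓ := by
    intro q
    rw [Int.toNat_lt' (Nat.pos_of_ne_zero hlne)]
    have : ((q : ℕ) : ℤ) < D := by exact_mod_cast q.isLt
    have hD' : (D:ℤ) ≤ ℓ := by exact_mod_cast hDl
    linarith
  have hpat : (patternAt (shiftC (r1, r2) z) : (Fin D × Fin D) → A) = patternAt (shiftC s y) := by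
    funext q
    have hc1 : (((r1 + (q.1 : ℤ)).toNat : ℤ)) = r1 + (q.1 : ℤ) := by
      apply Int.toNat_of_nonneg
      have h0 : (0:ℤ) ≤ (q.1 : ℤ) := by positivity
      linarith
    have hc2 : (((r2 + (q.2 : ℤ)).toNat : ℤ)) = r2 + (q.2 : ℤ) := by
      apply Int.toNat_of_nonneg
      have h0 : (0:ℤ) ≤ (q.2 : ℤ) := by positivity
      linarith
    have hz1 := congrFun hzp
      (⟨(r1 + (q.1 : ℤ)).toNat, hq1b q.1⟩, ⟨(r2 + (q.2 : ℤ)).toNat, hq2b q.2⟩)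
    simp only [patternAt, shiftC] at hz1 ⊢
    rw [hc1, hc2] at hz1
    rw [show r1 + ((q.1:ℤ) + 1) = r1 + (q.1:ℤ) + 1 from by ring,
        show r2 + ((q.2:ℤ) + 1) = r2 + (q.2:ℤ) + 1 from by ring, hz1]
    refine congrArg y ?_
    simp only [Prod.mk.injEq]
    constructor <;> linarith
  rw [hpat]
  exact hs

/-- Counting lemma: among `t ∈ [0, Kℓ)`, at most `DK + 1` of the points
`D t` are at a "straddling" residue modulo `ℓ`. -/
lemma Stmt16.card_bad {D ℓ K : ℕ} (hD : 0 < D) (hl : 0 < ℓ) (u : ℤ)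
    (hu0 : 0 ≤ u) (hu : u < ℓ) :
    ((Finset.Icc (0:ℤ) ((K:ℤ)*ℓ - 1)).filter
      (fun t => (ℓ:ℤ) - D < ((D:ℤ)*t - u) % ℓ)).card ≤ D*K + 1 := by
  classical
  have hl' : (0:ℤ) < ℓ := by exact_mod_cast hl
  have hD' : (0:ℤ) < D := by exact_mod_cast hD
  have hcard : (Finset.Icc (-1 : ℤ) ((D:ℤ)*K - 1)).card = D*K + 1 := by
    rw [Int.card_Icc]
    have : ((D:ℤ)*K - 1 + 1 - (-1)) = (D*K + 1 : ℕ) := by push_cast; ring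
    rw [this, Int.toNat_natCast]
  rw [← hcard]
  apply Finset.card_le_card_of_injOn (fun t => ((D:ℤ)*t - u) / ℓ)
  · intro t ht
    simp only [Finset.mem_coe, Finset.mem_filter, Finset.mem_Icc] at ht ⊢
    obtain ⟨⟨ht0, ht1⟩, _⟩ := ht
    constructor
    · rw [Int.le_ediv_iff_mul_le hl']
      nlinarith
    · have : ((D:ℤ)*t - u) / ℓ < (D:ℤ)*K := by
        rw [Int.ediv_lt_iff_lt_mul hl']
        nlinarith
      linarith
  · intro t ht t' ht' heq
    simp only [Finset.mem_coe, Finset.mem_filter, Finset.mem_Icc] at ht ht'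
    obtain ⟨⟨_, _⟩, hb⟩ := ht
    obtain ⟨⟨_, _⟩, hb'⟩ := ht'
    by_contra hne
    have h1 := Int.mul_ediv_add_emod ((D:ℤ)*t - u) ℓ
    have h2 := Int.mul_ediv_add_emod ((D:ℤ)*t' - u) ℓ
    have hlt1 : ((D:ℤ)*t - u) % ℓ < ℓ := Int.emod_lt_of_pos _ hl'
    have hlt2 : ((D:ℤ)*t' - u) % ℓ < ℓ := Int.emod_lt_of_pos _ hl'
    have hq : ((D:ℤ)*t - u) / ℓ = ((D:ℤ)*t' - u) / ℓ := heq
    have habs : (D:ℤ) ≤ |(D:ℤ)*t' - (D:ℤ)*t| := by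
      rw [show (D:ℤ)*t' - (D:ℤ)*t = (D:ℤ)*(t' - t) by ring, abs_mul]
      have h1' : (1:ℤ) ≤ |t' - t| := by
        rcases lt_or_gt_of_ne (fun h : t = t' => hne h) with h | h
        · rw [abs_of_pos (by linarith)]; linarith
        · rw [abs_of_neg (by linarith)]; linarith
      calc (D:ℤ) = D * 1 := by ring
        _ ≤ |(D:ℤ)| * |t' - t| := by
            rw [abs_of_pos hD']
            exact mul_le_mul_of_nonneg_left h1' (le_of_lt hD')
    rw [hq] at h1
    have hdiff : (D:ℤ)*t' - (D:ℤ)*t = ((D:ℤ)*t' - u) % ℓ - ((D:ℤ)*t - u) % ℓ := by linarith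
    have hsmall : |(D:ℤ)*t' - (D:ℤ)*t| < D := by
      rw [hdiff, abs_lt]
      constructor <;> linarith
    linarith

/-- Key lemma: if `x` belongs to a set `M ⊆ ⟨L⟩` which is invariant under a
pointwise equivalence `rel'`, then all the positions of the sparse sublattice
`Dℤ²` where a `rel'`-relaxed forbidden pattern occurs in `x` straddle one
single `ℓ`-grid. -/
lemma Stmt16.key_straddle {A : Type*} {D ℓ : ℕ} (hD : 0 < D) (hDl : D ≤ ℓ)
    {F : Set ((Fin D × Fin D) → A)} {L : Set ((Fin ℓ × Fin ℓ) → A)}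
    (hL : ∀ w ∈ L, ∃ x : Config2 A,
      (∀ u : ℤ × ℤ, shiftC u x ∉ cylOf F) ∧ patternAt x = w)
    (rel' : A → A → Prop) (hrefl : ∀ a, rel' a a) (hsymm : ∀ a b, rel' a b → rel' b a)
    (M : Set (Config2 A)) (hMsub : M ⊆ concat2 L)
    (hMrel : ∀ x y : Config2 A, (∀ v, rel' (x v) (y v)) → x ∈ M → y ∈ M)
    {x : Config2 A} (hx : x ∈ M) :
    ∃ u : ℤ × ℤ, 0 ≤ u.1 ∧ u.1 < (ℓ : ℤ) ∧ 0 ≤ u.2 ∧ u.2 < (ℓ : ℤ) ∧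
      ∀ m : ℤ × ℤ,
        (∃ p ∈ F, ∀ q : Fin D × Fin D,
            rel' (p q) (patternAt (shiftC ((D:ℤ) * m.1, (D:ℤ) * m.2) x) q)) →
        ((ℓ:ℤ) - D < ((D:ℤ) * m.1 - u.1) % ℓ ∨ (ℓ:ℤ) - D < ((D:ℤ) * m.2 - u.2) % ℓ) := by
  classical
  have hD' : (0:ℤ) < D := by exact_mod_cast hD
  have hDne : (D:ℤ) ≠ 0 := ne_of_gt hD'
  let mI : ℤ → ℤ := fun a => (a - 1) / D
  let qI : ℤ → ℤ := fun a => (a - 1) % D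
  have hqI0 : ∀ a, 0 ≤ qI a := fun a => Int.emod_nonneg _ hDne
  have hqIl : ∀ a, qI a < D := fun a => Int.emod_lt_of_pos _ hD'
  have hrec : ∀ a : ℤ, (D:ℤ) * mI a + (qI a + 1) = a := by
    intro a
    have h := Int.mul_ediv_add_emod (a - 1) (D:ℤ)
    show (D:ℤ) * ((a-1)/D) + ((a-1) % D + 1) = a
    linarith
  have hqN : ∀ a, (qI a).toNat < D := by
    intro a
    rw [Int.toNat_lt' (by omega : 0 < D)]
    exact hqIl a
  have hqcast : ∀ a, (((qI a).toNat : ℤ)) = qI a := fun a => Int.toNat_of_nonneg (hqI0 a)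
  let qF : ℤ → Fin D := fun a => ⟨(qI a).toNat, hqN a⟩
  let B' : Set (Config2 A) := {x' | ∃ p ∈ F, ∀ q : Fin D × Fin D, rel' (p q) (patternAt x' q)}
  let pk : Config2 A → ((Fin D × Fin D) → A) := fun x' =>
    if h : x' ∈ B' then h.choose else patternAt x'
  have pk_mem : ∀ x' ∈ B', pk x' ∈ F ∧ ∀ q, rel' (pk x' q) (patternAt x' q) := by
    intro x' h
    have he : pk x' = h.choose := dif_pos h
    rw [he]
    exact ⟨h.choose_spec.1, h.choose_spec.2⟩
  have pk_eq : ∀ x' ∉ B', pk x' = patternAt x' := by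
    intro x' h
    show (if h' : x' ∈ B' then h'.choose else patternAt x') = patternAt x'
    rw [dif_neg h]
  let y : Config2 A := fun v =>
    pk (shiftC ((D:ℤ) * mI v.1, (D:ℤ) * mI v.2) x) (qF v.1, qF v.2)
  have hpatid : ∀ v : ℤ × ℤ,
      patternAt (shiftC ((D:ℤ) * mI v.1, (D:ℤ) * mI v.2) x) (qF v.1, qF v.2) = x v := by
    intro v
    show x ((D:ℤ) * mI v.1 + (((qF v.1 : ℕ) : ℤ) + 1),
      (D:ℤ) * mI v.2 + (((qF v.2 : ℕ) : ℤ) + 1)) = x v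
    have c1 : ((qF v.1 : ℕ) : ℤ) = qI v.1 := hqcast v.1
    have c2 : ((qF v.2 : ℕ) : ℤ) = qI v.2 := hqcast v.2
    rw [c1, c2, hrec v.1, hrec v.2]
  have hxy : ∀ v, rel' (x v) (y v) := by
    intro v
    by_cases h : shiftC ((D:ℤ) * mI v.1, (D:ℤ) * mI v.2) x ∈ B'
    · have h2 := (pk_mem _ h).2 (qF v.1, qF v.2)
      rw [hpatid v] at h2
      exact hsymm _ _ h2
    · show rel' (x v) (pk (shiftC ((D:ℤ) * mI v.1, (D:ℤ) * mI v.2) x) (qF v.1, qF v.2))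
      rw [pk_eq _ h, hpatid v]
      exact hrefl _
  have hyM : y ∈ M := hMrel x y hxy hx
  have hocc : ∀ m : ℤ × ℤ, shiftC ((D:ℤ) * m.1, (D:ℤ) * m.2) x ∈ B' →
      patternAt (shiftC ((D:ℤ) * m.1, (D:ℤ) * m.2) y) ∈ F := by
    intro m hm
    have hmain : patternAt (shiftC ((D:ℤ) * m.1, (D:ℤ) * m.2) y)
        = pk (shiftC ((D:ℤ) * m.1, (D:ℤ) * m.2) x) := by
      funext q
      show y ((D:ℤ) * m.1 + ((q.1:ℤ) + 1), (D:ℤ) * m.2 + ((q.2:ℤ) + 1)) = _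
      have hmI1 : mI ((D:ℤ) * m.1 + ((q.1:ℤ) + 1)) = m.1 := by
        show ((D:ℤ) * m.1 + ((q.1:ℤ) + 1) - 1) / D = m.1
        rw [show (D:ℤ) * m.1 + ((q.1:ℤ) + 1) - 1 = (q.1:ℤ) + (D:ℤ) * m.1 by ring]
        rw [Int.add_mul_ediv_left _ _ hDne]
        rw [Int.ediv_eq_zero_of_lt (by positivity) (by exact_mod_cast q.1.isLt)]
        ring
      have hmI2 : mI ((D:ℤ) * m.2 + ((q.2:ℤ) + 1)) = m.2 := by
        show ((D:ℤ) * m.2 + ((q.2:ℤ) + 1) - 1) / D = m.2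
        rw [show (D:ℤ) * m.2 + ((q.2:ℤ) + 1) - 1 = (q.2:ℤ) + (D:ℤ) * m.2 by ring]
        rw [Int.add_mul_ediv_left _ _ hDne]
        rw [Int.ediv_eq_zero_of_lt (by positivity) (by exact_mod_cast q.2.isLt)]
        ring
      have hqF1 : qF ((D:ℤ) * m.1 + ((q.1:ℤ) + 1)) = q.1 := by
        apply Fin.ext
        show (qI ((D:ℤ) * m.1 + ((q.1:ℤ) + 1))).toNat = (q.1 : ℕ)
        have hq : qI ((D:ℤ) * m.1 + ((q.1:ℤ) + 1)) = (q.1:ℤ) := by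
          show ((D:ℤ) * m.1 + ((q.1:ℤ) + 1) - 1) % D = (q.1:ℤ)
          rw [show (D:ℤ) * m.1 + ((q.1:ℤ) + 1) - 1 = (q.1:ℤ) + (D:ℤ) * m.1 by ring]
          rw [Int.add_mul_emod_self_left]
          exact Int.emod_eq_of_lt (by positivity) (by exact_mod_cast q.1.isLt)
        rw [hq]
        simp
      have hqF2 : qF ((D:ℤ) * m.2 + ((q.2:ℤ) + 1)) = q.2 := by
        apply Fin.ext
        show (qI ((D:ℤ) * m.2 + ((q.2:ℤ) + 1))).toNat = (q.2 : ℕ)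
        have hq : qI ((D:ℤ) * m.2 + ((q.2:ℤ) + 1)) = (q.2:ℤ) := by
          show ((D:ℤ) * m.2 + ((q.2:ℤ) + 1) - 1) % D = (q.2:ℤ)
          rw [show (D:ℤ) * m.2 + ((q.2:ℤ) + 1) - 1 = (q.2:ℤ) + (D:ℤ) * m.2 by ring]
          rw [Int.add_mul_emod_self_left]
          exact Int.emod_eq_of_lt (by positivity) (by exact_mod_cast q.2.isLt)
        rw [hq]
        simp
      show pk (shiftC ((D:ℤ) * mI ((D:ℤ) * m.1 + ((q.1:ℤ) + 1)),
          (D:ℤ) * mI ((D:ℤ) * m.2 + ((q.2:ℤ) + 1))) x)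
          (qF ((D:ℤ) * m.1 + ((q.1:ℤ) + 1)), qF ((D:ℤ) * m.2 + ((q.2:ℤ) + 1))) = _
      rw [hmI1, hmI2, hqF1, hqF2]
    rw [hmain]
    exact (pk_mem _ hm).1
  obtain ⟨u, h1, h2, h3, h4, hstr⟩ := Stmt16.occ_straddle hD hDl hL (hMsub hyM)
  exact ⟨u, h1, h2, h3, h4, fun m hm => hstr _ (hocc m hm)⟩

/-- If `ν` is an ergodic shift-invariant probability measure whose support is
contained in the concatenated subshift `⟨L⟩` of a dictionary `L` of globally
admissible `ℓ × ℓ` patterns of the SFT `X = Σ²(A, F)` (with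
`F ⊆ A^{[1,D]²}`), then `ν([F]) ≤ 2D/ℓ`. -/
theorem stmt_16 {A : Type*} [MeasurableSpace A] {D ℓ : ℕ}
    (hD : 2 ≤ D) (hDl : D ≤ ℓ)
    (F : Set ((Fin D × Fin D) → A)) (hF : F.Finite)
    (L : Set ((Fin ℓ × Fin ℓ) → A))
    (hL : ∀ w ∈ L, ∃ x : Config2 A,
      (∀ u : ℤ × ℤ, shiftC u x ∉ cylOf F) ∧ patternAt x = w)
    (ν : Measure (Config2 A)) [IsProbabilityMeasure ν]
    (hinv : ∀ u, MeasurePreserving (shiftC u) ν ν)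
    (herg : ∀ S : Set (Config2 A), MeasurableSet S →
      (∀ u, shiftC u ⁻¹' S = S) → ν S = 0 ∨ ν S = 1)
    (hsupp : ν (concat2 L)ᶜ = 0) :
    ν (cylOf F) ≤ (2 * D : ENNReal) / (ℓ : ENNReal) := by
  classical
  have hD0 : 0 < D := by omega
  have hl0 : 0 < ℓ := by omega
  -- a full measurable set inside the concatenated subshift
  obtain ⟨G, hGs, hGm, hG0⟩ := exists_measurable_superset_of_null hsupp
  set M : Set (Config2 A) := Gᶜ with hMdef
  have hMm : MeasurableSet M := hGm.compl
  have hMsub : M ⊆ concat2 L := by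
    intro x hx
    by_contra h
    exact hx (hGs h)
  have hMae : ν Mᶜ = 0 := by
    rw [hMdef, compl_compl]
    exact hG0
  -- countable separating family
  obtain ⟨C, hCc, hCm, hCsep⟩ := Stmt16.exists_sep M hMm
  set rel' : A → A → Prop := fun a b => ∀ G ∈ C, (a ∈ G ↔ b ∈ G) with hreldef
  have hrefl : ∀ a, rel' a a := fun a G _ => Iff.rfl
  have hsymm : ∀ a b, rel' a b → rel' b a := fun a b h G hG => (h G hG).symm
  have hMrel : ∀ x y : Config2 A, (∀ v, rel' (x v) (y v)) → x ∈ M → y ∈ M := by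
    intro x y h hx
    exact (hCsep x y (fun v G hG => h v G hG)).mp hx
  -- the measurable relaxed forbidden cylinder
  set B : Set (Config2 A) :=
    {x' | ∃ p ∈ F, ∀ q : Fin D × Fin D, rel' (p q) (patternAt x' q)} with hBdef
  have hFB : cylOf F ⊆ B := fun x hx => ⟨patternAt x, hx, fun q => hrefl _⟩
  have hrelm : ∀ b : A, MeasurableSet {a | rel' b a} := by
    intro b
    have : {a | rel' b a} = ⋂ G ∈ C, {a | b ∈ G ↔ a ∈ G} := by
      ext a
      simp [hreldef, Set.mem_iInter]
    rw [this]
    refine MeasurableSet.biInter hCc fun G hG => ?_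
    by_cases hb : b ∈ G
    · have : {a | b ∈ G ↔ a ∈ G} = G := by ext a; simp [hb]
      rw [this]; exact hCm G hG
    · have : {a | b ∈ G ↔ a ∈ G} = Gᶜ := by ext a; simp [hb]
      rw [this]; exact (hCm G hG).compl
  have hBm : MeasurableSet B := by
    have hBeq : B = ⋃ p ∈ F, ⋂ q : Fin D × Fin D,
        (fun x : Config2 A => x ((q.1:ℤ) + 1, (q.2:ℤ) + 1)) ⁻¹' {a | rel' (p q) a} := by
      ext x
      simp only [hBdef, Set.mem_setOf_eq, Set.mem_iUnion, Set.mem_iInter, Set.mem_preimage,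
        patternAt]
      exact ⟨fun ⟨p, hp, h⟩ => ⟨p, hp, h⟩, fun ⟨p, hp, h⟩ => ⟨p, hp, h⟩⟩
    rw [hBeq]
    exact MeasurableSet.biUnion hF.countable fun p _ =>
      MeasurableSet.iInter fun q => measurable_pi_apply _ (hrelm (p q))
  -- the per-window inequality
  have main : ∀ K : ℕ, 0 < K →
      (((K * ℓ) * (K * ℓ) : ℕ) : ℝ≥0∞) * ν B ≤ ((2 * (D * K + 1) * (K * ℓ) : ℕ) : ℝ≥0∞) := by
    intro K hK
    set SqI : Finset ℤ := Finset.Icc (0:ℤ) ((K:ℤ) * ℓ - 1) with hSqI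
    have hSqIcard : SqI.card = K * ℓ := by
      rw [hSqI, Int.card_Icc]
      have : ((K:ℤ) * ℓ - 1 + 1 - 0) = ((K * ℓ : ℕ) : ℤ) := by push_cast; ring
      rw [this, Int.toNat_natCast]
    set Msq : Finset (ℤ × ℤ) := SqI ×ˢ SqI with hMsq
    set pre : (ℤ × ℤ) → Set (Config2 A) :=
      fun m => shiftC ((D:ℤ) * m.1, (D:ℤ) * m.2) ⁻¹' B with hpre
    have hprem : ∀ m, MeasurableSet (pre m) := fun m => (hinv _).measurable hBm
    have hpreν : ∀ m, ν (pre m) = ν B := fun m =>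
      (hinv _).measure_preimage hBm.nullMeasurableSet
    -- the sum of the measures equals the integral of the counting function
    have hsum1 : ∑ m ∈ Msq, ν (pre m)
        = ∫⁻ x, (∑ m ∈ Msq, (pre m).indicator (1 : Config2 A → ℝ≥0∞) x) ∂ν := by
      rw [lintegral_finset_sum _ (fun m _ => (measurable_one.indicator (hprem m)))]
      exact Finset.sum_congr rfl fun m _ => (lintegral_indicator_one (hprem m)).symm
    -- pointwise bound on the counting function on M
    have hbd : ∀ x ∈ M,
        (∑ m ∈ Msq, (pre m).indicator (1 : Config2 A → ℝ≥0∞) x)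
          ≤ ((2 * (D * K + 1) * (K * ℓ) : ℕ) : ℝ≥0∞) := by
      intro x hx
      obtain ⟨u, hu1, hu2, hu3, hu4, hstr⟩ :=
        Stmt16.key_straddle hD0 hDl hL rel' hrefl hsymm M hMsub hMrel hx
      have hcount : (∑ m ∈ Msq, (pre m).indicator (1 : Config2 A → ℝ≥0∞) x)
          = ((Msq.filter (fun m => x ∈ pre m)).card : ℝ≥0∞) := by
        rw [← Finset.sum_boole]
        refine Finset.sum_congr rfl fun m _ => ?_
        by_cases h : x ∈ pre m <;> simp [Set.indicator_apply, h]
      rw [hcount]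
      have hsub : Msq.filter (fun m => x ∈ pre m) ⊆
          ((SqI.filter (fun t => (ℓ:ℤ) - D < ((D:ℤ) * t - u.1) % ℓ)) ×ˢ SqI)
          ∪ (SqI ×ˢ (SqI.filter (fun t => (ℓ:ℤ) - D < ((D:ℤ) * t - u.2) % ℓ))) := by
        intro m hm
        rw [Finset.mem_filter] at hm
        obtain ⟨hmM, hmx⟩ := hm
        rw [hMsq, Finset.mem_product] at hmM
        have hBx : ∃ p ∈ F, ∀ q : Fin D × Fin D,
            rel' (p q) (patternAt (shiftC ((D:ℤ) * m.1, (D:ℤ) * m.2) x) q) := hmx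
        rcases hstr m hBx with h | h
        · exact Finset.mem_union_left _
            (Finset.mem_product.mpr ⟨Finset.mem_filter.mpr ⟨hmM.1, h⟩, hmM.2⟩)
        · exact Finset.mem_union_right _
            (Finset.mem_product.mpr ⟨hmM.1, Finset.mem_filter.mpr ⟨hmM.2, h⟩⟩)
      have hcard1 := Stmt16.card_bad (K := K) hD0 hl0 u.1 hu1 hu2
      have hcard2 := Stmt16.card_bad (K := K) hD0 hl0 u.2 hu3 hu4
      have hcards : (Msq.filter (fun m => x ∈ pre m)).card ≤ 2 * (D * K + 1) * (K * ℓ) := by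
        calc (Msq.filter (fun m => x ∈ pre m)).card
            ≤ _ := Finset.card_le_card hsub
          _ ≤ ((SqI.filter (fun t => (ℓ:ℤ) - D < ((D:ℤ) * t - u.1) % ℓ)) ×ˢ SqI).card
              + (SqI ×ˢ (SqI.filter (fun t => (ℓ:ℤ) - D < ((D:ℤ) * t - u.2) % ℓ))).card :=
            Finset.card_union_le _ _
          _ ≤ (D * K + 1) * (K * ℓ) + (K * ℓ) * (D * K + 1) := by
              rw [Finset.card_product, Finset.card_product, hSqIcard]
              exact Nat.add_le_add
                (Nat.mul_le_mul_right _ hcard1) (Nat.mul_le_mul_left _ hcard2)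
          _ = 2 * (D * K + 1) * (K * ℓ) := by ring
      exact_mod_cast Nat.cast_le.mpr hcards
    -- integrate
    have hae : ∀ᵐ x ∂ν, x ∈ M := by
      refine MeasureTheory.mem_ae_iff.mpr ?_
      simpa using hMae
    have hint : (∫⁻ x, (∑ m ∈ Msq, (pre m).indicator (1 : Config2 A → ℝ≥0∞) x) ∂ν)
        ≤ ((2 * (D * K + 1) * (K * ℓ) : ℕ) : ℝ≥0∞) := by
      calc ∫⁻ x, (∑ m ∈ Msq, (pre m).indicator (1 : Config2 A → ℝ≥0∞) x) ∂ν
          ≤ ∫⁻ _x, ((2 * (D * K + 1) * (K * ℓ) : ℕ) : ℝ≥0∞) ∂ν :=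
            lintegral_mono_ae (hae.mono fun x hx => hbd x hx)
        _ = ((2 * (D * K + 1) * (K * ℓ) : ℕ) : ℝ≥0∞) := by
            simp [lintegral_const]
    have hsum2 : ∑ m ∈ Msq, ν (pre m) = (((K * ℓ) * (K * ℓ) : ℕ) : ℝ≥0∞) * ν B := by
      rw [Finset.sum_congr rfl fun m _ => hpreν m, Finset.sum_const, hMsq,
        Finset.card_product, hSqIcard, nsmul_eq_mul]
    calc (((K * ℓ) * (K * ℓ) : ℕ) : ℝ≥0∞) * ν B = ∑ m ∈ Msq, ν (pre m) := hsum2.symm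
      _ = _ := hsum1
      _ ≤ _ := hint
  -- conclude
  refine le_trans (measure_mono hFB) ?_
  refine ENNReal.le_of_forall_pos_le_add fun ε hε _ => ?_
  obtain ⟨K, hK1, hKbig⟩ : ∃ K : ℕ, 0 < K ∧ (2 : ℝ≥0∞) / ((K:ℝ≥0∞) * (ℓ:ℝ≥0∞)) ≤ (ε : ℝ≥0∞) := by
    refine ⟨⌈(2:ℝ≥0) / ε⌉₊ + 1, Nat.succ_pos _, ?_⟩
    set K := ⌈(2:ℝ≥0) / ε⌉₊ + 1 with hKdef
    have hK0 : ((K:ℝ≥0∞)) ≠ 0 := by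
      simp [hKdef]
    have step1 : (2 : ℝ≥0∞) / ((K:ℝ≥0∞) * (ℓ:ℝ≥0∞)) ≤ (2 : ℝ≥0∞) / (K:ℝ≥0∞) := by
      refine ENNReal.div_le_div_left ?_ 2
      have : (1:ℝ≥0∞) ≤ (ℓ:ℝ≥0∞) := by
        exact_mod_cast Nat.one_le_cast.mpr hl0
      calc (K:ℝ≥0∞) = K * 1 := by ring
        _ ≤ (K:ℝ≥0∞) * ℓ := mul_le_mul_right this _
    refine le_trans step1 ?_
    rw [ENNReal.div_le_iff_le_mul (Or.inl hK0) (Or.inl (ENNReal.natCast_ne_top K))]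
    have hnn : (2:ℝ≥0) ≤ ε * K := by
      have h1 : (2:ℝ≥0) / ε ≤ (K:ℝ≥0) := by
        refine le_trans (Nat.le_ceil _) ?_
        exact_mod_cast Nat.le_succ _
      rw [div_le_iff₀ hε] at h1
      calc (2:ℝ≥0) ≤ (K:ℝ≥0) * ε := h1
        _ = ε * K := mul_comm _ _
    calc (2:ℝ≥0∞) = ((2:ℝ≥0) : ℝ≥0∞) := by norm_num
      _ ≤ (((ε * K : ℝ≥0)) : ℝ≥0∞) := ENNReal.coe_le_coe.mpr hnn
      _ = (ε : ℝ≥0∞) * (K:ℝ≥0∞) := by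
          rw [ENNReal.coe_mul]
          norm_num
  have h1 := main K hK1
  have hKl0 : (((K * ℓ : ℕ)) : ℝ≥0∞) ≠ 0 := by
    have : K * ℓ ≠ 0 := by positivity
    exact_mod_cast this
  have hKlt : (((K * ℓ : ℕ)) : ℝ≥0∞) ≠ ⊤ := ENNReal.natCast_ne_top _
  have hdiv : ν B ≤ ((2 * (D * K + 1) * (K * ℓ) : ℕ) : ℝ≥0∞) / (((K * ℓ) * (K * ℓ) : ℕ) : ℝ≥0∞) := by
    rw [ENNReal.le_div_iff_mul_le (Or.inl (by
      exact_mod_cast (Nat.cast_ne_zero (R := ℝ≥0∞)).mpr (by positivity)))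
      (Or.inl (ENNReal.natCast_ne_top _))]
    rw [mul_comm]
    exact h1
  refine le_trans hdiv ?_
  have hsimp : ((2 * (D * K + 1) * (K * ℓ) : ℕ) : ℝ≥0∞) / (((K * ℓ) * (K * ℓ) : ℕ) : ℝ≥0∞)
      = ((2 * (D * K + 1) : ℕ) : ℝ≥0∞) / (((K * ℓ) : ℕ) : ℝ≥0∞) := by
    rw [show ((2 * (D * K + 1) * (K * ℓ) : ℕ) : ℝ≥0∞)
        = ((2 * (D * K + 1) : ℕ) : ℝ≥0∞) * (((K * ℓ) : ℕ) : ℝ≥0∞) by push_cast; ring]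
    rw [show (((K * ℓ) * (K * ℓ) : ℕ) : ℝ≥0∞)
        = (((K * ℓ) : ℕ) : ℝ≥0∞) * (((K * ℓ) : ℕ) : ℝ≥0∞) by push_cast; ring]
    exact ENNReal.mul_div_mul_right _ _ hKl0 hKlt
  rw [hsimp]
  have hsplit : ((2 * (D * K + 1) : ℕ) : ℝ≥0∞) / (((K * ℓ) : ℕ) : ℝ≥0∞)
      = ((2 * D * K : ℕ) : ℝ≥0∞) / (((K * ℓ) : ℕ) : ℝ≥0∞)
        + (2 : ℝ≥0∞) / (((K * ℓ) : ℕ) : ℝ≥0∞) := by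
    rw [← ENNReal.add_div]
    congr 1
    push_cast; ring
  rw [hsplit]
  have hfirst : ((2 * D * K : ℕ) : ℝ≥0∞) / (((K * ℓ) : ℕ) : ℝ≥0∞) = (2 * D : ℝ≥0∞) / (ℓ : ℝ≥0∞) := by
    rw [show ((2 * D * K : ℕ) : ℝ≥0∞) = (2 * (D:ℝ≥0∞)) * (K:ℝ≥0∞) by push_cast; ring]
    rw [show (((K * ℓ) : ℕ) : ℝ≥0∞) = ((ℓ:ℝ≥0∞)) * (K:ℝ≥0∞) by push_cast; ring]
    exact ENNReal.mul_div_mul_right _ _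
      (by exact_mod_cast Nat.cast_ne_zero.mpr hK1.ne') (ENNReal.natCast_ne_top _)
  rw [hfirst]
  have hlast : (2 : ℝ≥0∞) / (((K * ℓ) : ℕ) : ℝ≥0∞) ≤ (ε : ℝ≥0∞) := by
    refine le_trans (le_of_eq ?_) hKbig
    congr 1
    push_cast
    ring
  exact add_le_add_right hlast _
end

section
/- Let n > 2ℓ > 2 be integers, ε ∈ (0,1), and S ⊆ [0, n-2ℓ]² with card(S) ≥ n²(1-ε). Let X̂ be a ℤ²-subshift over alphabet Â whose configurations are vertically aligned over a one-dimensional alphabet Ã (so that every globally admissible ℓ×ℓ pattern is determined by a word in L(X̃, ℓ) of length ℓ together with at most C(ℓ) choices, where C is the relative complexity function). Let Ê = {w ∈ Â^{[1,n]²} : ∀u ∈ S, σ^u(w)|_{[1,2ℓ]²} ∈ L(X̂, 2ℓ)}. Then (1/n²)·log card(Ê) ≤ (1/ℓ)·log card(Ã) + (1/ℓ²)·log C(ℓ) + ε·log card(Â). -/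
open MeasureTheory

namespace Stmt19

/-- `ℓ⌈a/ℓ⌉`. -/
def cmapN (ℓ a : ℕ) : ℕ := ℓ * ((a + ℓ - 1) / ℓ)

/-- `ℓ⌊a/ℓ⌋`. -/
def vmapN (ℓ a : ℕ) : ℕ := ℓ * (a / ℓ)

lemma cmapN_bounds {ℓ : ℕ} (hℓ : 0 < ℓ) (a : ℕ) :
    a ≤ cmapN ℓ a ∧ cmapN ℓ a ≤ a + ℓ - 1 := by
  have e := Nat.div_add_mod (a + ℓ - 1) ℓ
  have hm : (a + ℓ - 1) % ℓ < ℓ := Nat.mod_lt _ hℓ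
  unfold cmapN
  omega

lemma vmapN_le {ℓ : ℕ} (hℓ : 0 < ℓ) (a : ℕ) :
    vmapN ℓ a + a % ℓ = a := by
  have e := Nat.div_add_mod a ℓ
  unfold vmapN
  omega

lemma vmapN_add {ℓ : ℕ} (hℓ : 0 < ℓ) (k q : ℕ) (hq : q < ℓ) :
    vmapN ℓ (ℓ * k + q) = ℓ * k := by
  unfold vmapN
  rw [Nat.mul_add_div hℓ]
  simp [Nat.div_eq_of_lt hq]

lemma vmapN_cmapN_add {ℓ : ℕ} (hℓ : 0 < ℓ) (a q : ℕ) (hq : q < ℓ) :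
    vmapN ℓ (cmapN ℓ a + q) = cmapN ℓ a := vmapN_add hℓ _ q hq

variable {Atil C : Type*} [Fintype Atil] [Fintype C]

open Classical in
/-- The set of globally admissible `ℓ × ℓ` patterns with prescribed bottom row. -/
noncomputable def fib (Xh : Set (Config2 (Atil × C))) {ℓ : ℕ} (hℓ0 : 0 < ℓ)
    (wt : Fin ℓ → Atil) : Finset ((Fin ℓ × Fin ℓ) → Atil × C) :=
  Finset.univ.filter fun p => (∃ x ∈ Xh, patternAt x = p) ∧
    ∀ i : Fin ℓ, (p (i, ⟨0, hℓ0⟩)).1 = wt i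

open Classical in
lemma mem_fib {Xh : Set (Config2 (Atil × C))} {ℓ : ℕ} {hℓ0 : 0 < ℓ}
    {wt : Fin ℓ → Atil} {p : (Fin ℓ × Fin ℓ) → Atil × C} :
    p ∈ fib Xh hℓ0 wt ↔ (∃ x ∈ Xh, patternAt x = p) ∧
      ∀ i : Fin ℓ, (p (i, ⟨0, hℓ0⟩)).1 = wt i := by
  simp [fib]

lemma mem_fib_self {Xh : Set (Config2 (Atil × C))} {ℓ : ℕ} {hℓ0 : 0 < ℓ}
    {p : (Fin ℓ × Fin ℓ) → Atil × C} (h : ∃ x ∈ Xh, patternAt x = p) :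
    p ∈ fib Xh hℓ0 (fun i => (p (i, ⟨0, hℓ0⟩)).1) :=
  mem_fib.2 ⟨h, fun _ => rfl⟩

/-- The rank of a pattern among the admissible patterns with the same bottom row. -/
noncomputable def rank (Xh : Set (Config2 (Atil × C))) {ℓ : ℕ} (hℓ0 : 0 < ℓ)
    (p : (Fin ℓ × Fin ℓ) → Atil × C) : ℕ :=
  ((fib Xh hℓ0 fun i => (p (i, ⟨0, hℓ0⟩)).1).filter
    fun p' => Fintype.equivFin _ p' < Fintype.equivFin _ p).card

lemma rank_lt_card {Xh : Set (Config2 (Atil × C))} {ℓ : ℕ} {hℓ0 : 0 < ℓ}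
    {wt : Fin ℓ → Atil} {p : (Fin ℓ × Fin ℓ) → Atil × C} (hp : p ∈ fib Xh hℓ0 wt) :
    rank Xh hℓ0 p < (fib Xh hℓ0 wt).card := by
  classical
  have hwt : (fun i => (p (i, ⟨0, hℓ0⟩)).1) = wt := funext (mem_fib.1 hp).2
  rw [rank, hwt]
  refine Finset.card_lt_card ⟨Finset.filter_subset _ _, fun hsub => ?_⟩
  have := hsub hp
  simp at this

lemma rank_lt_rank {Xh : Set (Config2 (Atil × C))} {ℓ : ℕ} {hℓ0 : 0 < ℓ}
    {wt : Fin ℓ → Atil} {p p' : (Fin ℓ × Fin ℓ) → Atil × C}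
    (hp : p ∈ fib Xh hℓ0 wt) (hp' : p' ∈ fib Xh hℓ0 wt)
    (hlt : Fintype.equivFin _ p < Fintype.equivFin _ p') :
    rank Xh hℓ0 p < rank Xh hℓ0 p' := by
  classical
  have hw : (fun i => (p (i, ⟨0, hℓ0⟩)).1) = wt := funext (mem_fib.1 hp).2
  have hw' : (fun i => (p' (i, ⟨0, hℓ0⟩)).1) = wt := funext (mem_fib.1 hp').2
  rw [rank, rank, hw, hw']
  refine Finset.card_lt_card ⟨?_, fun hsub => ?_⟩
  · exact Finset.monotone_filter_right _ (fun p'' _ h'' => lt_trans h'' hlt)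
  · have hmem : p ∈ (fib Xh hℓ0 wt).filter
        (fun p'' => Fintype.equivFin _ p'' < Fintype.equivFin _ p') :=
      Finset.mem_filter.2 ⟨hp, hlt⟩
    have := Finset.mem_filter.1 (hsub hmem)
    exact lt_irrefl _ this.2

lemma rank_inj {Xh : Set (Config2 (Atil × C))} {ℓ : ℕ} {hℓ0 : 0 < ℓ}
    {wt : Fin ℓ → Atil} {p p' : (Fin ℓ × Fin ℓ) → Atil × C}
    (hp : p ∈ fib Xh hℓ0 wt) (hp' : p' ∈ fib Xh hℓ0 wt)
    (hr : rank Xh hℓ0 p = rank Xh hℓ0 p') : p = p' := by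
  rcases lt_trichotomy (Fintype.equivFin _ p) (Fintype.equivFin _ p') with h | h | h
  · exact absurd hr (rank_lt_rank hp hp' h).ne
  · exact (Fintype.equivFin _).injective h
  · exact absurd hr.symm (rank_lt_rank hp' hp h).ne

/-- The `ℓ × ℓ` pattern read in `w` on the block with lower-left corner `v`. -/
def blockPat {n ℓ : ℕ} (w : (Fin n × Fin n) → Atil × C) (v : ℕ × ℕ)
    (hv1 : v.1 + ℓ ≤ n) (hv2 : v.2 + ℓ ≤ n) : (Fin ℓ × Fin ℓ) → Atil × C :=
  fun q => w (⟨v.1 + q.1.val, by have := q.1.isLt; omega⟩,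
              ⟨v.2 + q.2.val, by have := q.2.isLt; omega⟩)

lemma blockPat_adm {n ℓ : ℕ}
    {Xh : Set (Config2 (Atil × C))} (hXinv : ∀ u : ℤ × ℤ, shiftC u '' Xh = Xh)
    (w : (Fin n × Fin n) → Atil × C) (u v : ℕ × ℕ)
    (hu1 : u.1 + 2 * ℓ ≤ n) (hu2 : u.2 + 2 * ℓ ≤ n)
    (huv1 : u.1 ≤ v.1) (huv2 : u.2 ≤ v.2) (hd1 : v.1 < u.1 + ℓ) (hd2 : v.2 < u.2 + ℓ)
    (hv1 : v.1 + ℓ ≤ n) (hv2 : v.2 + ℓ ≤ n)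
    (x : Config2 (Atil × C)) (hx : x ∈ Xh)
    (hpat : ∀ q : Fin (2 * ℓ) × Fin (2 * ℓ),
      x ((q.1 : ℤ) + 1, (q.2 : ℤ) + 1) =
        w (⟨u.1 + q.1.val, by have := q.1.isLt; omega⟩,
           ⟨u.2 + q.2.val, by have := q.2.isLt; omega⟩)) :
    ∃ y ∈ Xh, patternAt y = blockPat w v hv1 hv2 := by
  refine ⟨shiftC (((v.1 - u.1 : ℕ) : ℤ), ((v.2 - u.2 : ℕ) : ℤ)) x, ?_, ?_⟩
  · rw [← hXinv (((v.1 - u.1 : ℕ) : ℤ), ((v.2 - u.2 : ℕ) : ℤ))]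
    exact Set.mem_image_of_mem _ hx
  · funext q
    have h1 : (v.1 - u.1) + q.1.val < 2 * ℓ := by have := q.1.isLt; omega
    have h2 : (v.2 - u.2) + q.2.val < 2 * ℓ := by have := q.2.isLt; omega
    have key := hpat (⟨(v.1 - u.1) + q.1.val, h1⟩, ⟨(v.2 - u.2) + q.2.val, h2⟩)
    simp only [patternAt, shiftC, blockPat]
    have e1 : ((v.1 - u.1 : ℕ) : ℤ) + ((q.1 : ℤ) + 1) =
        (((v.1 - u.1) + q.1.val : ℕ) : ℤ) + 1 := by push_cast; ring
    have e2 : ((v.2 - u.2 : ℕ) : ℤ) + ((q.2 : ℤ) + 1) =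
        (((v.2 - u.2) + q.2.val : ℕ) : ℤ) + 1 := by push_cast; ring
    rw [e1, e2]
    rw [key]
    congr 1
    refine Prod.ext ?_ ?_ <;> apply Fin.ext <;> simp <;> omega

/-- The set `Ê` of configurations on `[1,n]²` all of whose `2ℓ × 2ℓ` windows based
at points of `S` are globally admissible. -/
abbrev EType (Atil C : Type*) (n ℓ : ℕ) (Xh : Set (Config2 (Atil × C)))
    (S : Finset (ℕ × ℕ)) : Type _ :=
  {w : (Fin n × Fin n) → Atil × C //
    ∀ u ∈ S, ∀ (_ : u.1 + 2 * ℓ ≤ n) (_ : u.2 + 2 * ℓ ≤ n),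
      ∃ x ∈ Xh, ∀ q : Fin (2 * ℓ) × Fin (2 * ℓ),
        x ((q.1 : ℤ) + 1, (q.2 : ℤ) + 1) =
          w (⟨u.1 + q.1.val, by have := q.1.isLt; omega⟩,
             ⟨u.2 + q.2.val, by have := q.2.isLt; omega⟩)}

end Stmt19

namespace Stmt19

variable {Atil C : Type*} [Fintype Atil] [Fintype C]

lemma card_EType_le {n ℓ : ℕ} (hℓ0 : 0 < ℓ) (hn : 2 * ℓ < n)
    {Xh : Set (Config2 (Atil × C))}
    (hXinv : ∀ u : ℤ × ℤ, shiftC u '' Xh = Xh)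
    {S : Finset (ℕ × ℕ)}
    (hS : ∀ u ∈ S, u.1 + 2 * ℓ ≤ n ∧ u.2 + 2 * ℓ ≤ n)
    {Cl : ℕ} (hCl : 0 < Cl)
    (hC : ∀ wt : Fin ℓ → Atil, (fib Xh hℓ0 wt).card ≤ Cl) :
    ∃ B F : ℕ, S.card ≤ ℓ * ℓ * B ∧ ℓ * ℓ * B + F ≤ n * n ∧
      Nat.card (EType Atil C n ℓ Xh S) ≤
        (Fintype.card Atil ^ ℓ * Cl) ^ B * Fintype.card (Atil × C) ^ F := by
  classical
  set cm : ℕ × ℕ → ℕ × ℕ := fun u => (cmapN ℓ u.1, cmapN ℓ u.2) with hcm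
  set vm : ℕ × ℕ → ℕ × ℕ := fun c => (vmapN ℓ c.1, vmapN ℓ c.2) with hvm
  set Bg : Finset (ℕ × ℕ) := S.image cm with hBgdef
  set Fr : Finset (ℕ × ℕ) :=
    (Finset.range n ×ˢ Finset.range n).filter (fun c => ¬ vm c ∈ Bg) with hFrdef
  -- bounds for corners in Bg
  have hBgn : ∀ v ∈ Bg, ∃ u ∈ S, cm u = v ∧ u.1 ≤ v.1 ∧ u.2 ≤ v.2 ∧
      v.1 < u.1 + ℓ ∧ v.2 < u.2 + ℓ ∧ v.1 + ℓ ≤ n ∧ v.2 + ℓ ≤ n := by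
    intro v hv
    obtain ⟨u, huS, hcmu⟩ := Finset.mem_image.1 hv
    obtain ⟨hu1, hu2⟩ := hS u huS
    have b1 := cmapN_bounds hℓ0 u.1
    have b2 := cmapN_bounds hℓ0 u.2
    have e1 : cmapN ℓ u.1 = v.1 := congrArg Prod.fst hcmu
    have e2 : cmapN ℓ u.2 = v.2 := congrArg Prod.snd hcmu
    exact ⟨u, huS, hcmu, by omega, by omega, by omega, by omega, by omega, by omega⟩
  have hBgn' : ∀ v : ↥Bg, v.1.1 + ℓ ≤ n ∧ v.1.2 + ℓ ≤ n := by
    intro v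
    obtain ⟨u, -, -, -, -, -, -, h1, h2⟩ := hBgn v.1 v.2
    exact ⟨h1, h2⟩
  -- corners in Bg are multiples of ℓ
  have hBgmul : ∀ v ∈ Bg, ∀ q1 q2 : ℕ, q1 < ℓ → q2 < ℓ →
      vm (v.1 + q1, v.2 + q2) = v := by
    intro v hv q1 q2 hq1 hq2
    obtain ⟨u, -, hcmu, -⟩ := hBgn v hv
    have e1 : cmapN ℓ u.1 = v.1 := congrArg Prod.fst hcmu
    have e2 : cmapN ℓ u.2 = v.2 := congrArg Prod.snd hcmu
    have k1 := vmapN_cmapN_add hℓ0 u.1 q1 hq1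
    have k2 := vmapN_cmapN_add hℓ0 u.2 q2 hq2
    rw [e1] at k1
    rw [e2] at k2
    simp only [hvm]
    exact Prod.ext k1 k2
  refine ⟨Bg.card, Fr.card, ?_, ?_, ?_⟩
  · -- S.card ≤ ℓ²·|Bg|
    refine Finset.card_le_mul_card_image S (ℓ * ℓ) ?_
    intro v hv
    have hsub : S.filter (fun u => cm u = v) ⊆
        (Finset.Ico (v.1 + 1 - ℓ) (v.1 + 1)) ×ˢ (Finset.Ico (v.2 + 1 - ℓ) (v.2 + 1)) := by
      intro u hu
      obtain ⟨huS, hcmu⟩ := Finset.mem_filter.1 hu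
      have b1 := cmapN_bounds hℓ0 u.1
      have b2 := cmapN_bounds hℓ0 u.2
      have e1 : cmapN ℓ u.1 = v.1 := congrArg Prod.fst hcmu
      have e2 : cmapN ℓ u.2 = v.2 := congrArg Prod.snd hcmu
      simp only [Finset.mem_product, Finset.mem_Ico]
      omega
    calc (S.filter (fun u => cm u = v)).card
        ≤ ((Finset.Ico (v.1 + 1 - ℓ) (v.1 + 1)) ×ˢ (Finset.Ico (v.2 + 1 - ℓ) (v.2 + 1))).card :=
          Finset.card_le_card hsub
      _ = (v.1 + 1 - (v.1 + 1 - ℓ)) * (v.2 + 1 - (v.2 + 1 - ℓ)) := by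
          rw [Finset.card_product, Nat.card_Ico, Nat.card_Ico]
      _ ≤ ℓ * ℓ := Nat.mul_le_mul (by omega) (by omega)
  · -- ℓ²·|Bg| + |Fr| ≤ n²
    have h2a : ℓ * ℓ * Bg.card ≤
        ((Finset.range n ×ˢ Finset.range n).filter (fun c => vm c ∈ Bg)).card := by
      have hinj : ((Finset.range ℓ ×ˢ Finset.range ℓ) ×ˢ Bg).card ≤
          ((Finset.range n ×ˢ Finset.range n).filter (fun c => vm c ∈ Bg)).card := by
        apply Finset.card_le_card_of_injOn (fun qv => (qv.2.1 + qv.1.1, qv.2.2 + qv.1.2))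
        · rintro ⟨q, v⟩ hmem
          simp only [Finset.mem_coe, Finset.mem_product, Finset.mem_range] at hmem
          obtain ⟨⟨hq1, hq2⟩, hvB⟩ := hmem
          obtain ⟨u, -, -, -, -, -, -, h1, h2⟩ := hBgn v hvB
          have := hBgmul v hvB q.1 q.2 hq1 hq2
          simp only [Finset.mem_coe, Finset.mem_filter, Finset.mem_product, Finset.mem_range]
          exact ⟨⟨by omega, by omega⟩, by rw [this]; exact hvB⟩
        · rintro ⟨q, v⟩ hmem ⟨q', v'⟩ hmem' heq
          simp only [Finset.mem_coe, Finset.mem_product, Finset.mem_range] at hmem hmem'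
          obtain ⟨⟨hq1, hq2⟩, hvB⟩ := hmem
          obtain ⟨⟨hq1', hq2'⟩, hvB'⟩ := hmem'
          have e1 : v.1 + q.1 = v'.1 + q'.1 := congrArg Prod.fst heq
          have e2 : v.2 + q.2 = v'.2 + q'.2 := congrArg Prod.snd heq
          have hv := hBgmul v hvB q.1 q.2 hq1 hq2
          have hv' := hBgmul v' hvB' q'.1 q'.2 hq1' hq2'
          have hvv : v = v' := by rw [← hv, ← hv', e1, e2]
          have : q = q' := by
            obtain ⟨e1', e2'⟩ : v.1 = v'.1 ∧ v.2 = v'.2 :=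
              ⟨congrArg Prod.fst hvv, congrArg Prod.snd hvv⟩
            exact Prod.ext (by omega) (by omega)
          rw [hvv, this]
      calc ℓ * ℓ * Bg.card = ((Finset.range ℓ ×ˢ Finset.range ℓ) ×ˢ Bg).card := by
            rw [Finset.card_product, Finset.card_product, Finset.card_range]
        _ ≤ _ := hinj
    have h2b : ((Finset.range n ×ˢ Finset.range n).filter (fun c => vm c ∈ Bg)).card
        + Fr.card = n * n := by
      rw [hFrdef, Finset.card_filter_add_card_filter_not,
        Finset.card_product, Finset.card_range]
    omega
  · -- the counting injection
    have hadm : ∀ (w : EType Atil C n ℓ Xh S) (v : ↥Bg),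
        blockPat w.1 v.1 (hBgn' v).1 (hBgn' v).2 ∈ fib Xh hℓ0
          (fun i => (blockPat w.1 v.1 (hBgn' v).1 (hBgn' v).2 (i, ⟨0, hℓ0⟩)).1) := by
      intro w v
      obtain ⟨u, huS, hcmu, d1, d2, d3, d4, d5, d6⟩ := hBgn v.1 v.2
      obtain ⟨hu1, hu2⟩ := hS u huS
      obtain ⟨x, hx, hpat⟩ := w.2 u huS hu1 hu2
      exact mem_fib_self
        (blockPat_adm hXinv w.1 u v.1 hu1 hu2 d1 d2 d3 d4 (hBgn' v).1 (hBgn' v).2 x hx hpat)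
    have hFrn : ∀ c : ↥Fr, c.1.1 < n ∧ c.1.2 < n := by
      intro c
      have := Finset.mem_filter.1 c.2
      have := Finset.mem_product.1 this.1
      simp only [Finset.mem_range] at this
      exact this
    set f : EType Atil C n ℓ Xh S →
        (↥Bg → (Fin ℓ → Atil) × Fin Cl) × (↥Fr → Atil × C) := fun w =>
      (fun v => ((fun i => (blockPat w.1 v.1 (hBgn' v).1 (hBgn' v).2 (i, ⟨0, hℓ0⟩)).1),
        ⟨rank Xh hℓ0 (blockPat w.1 v.1 (hBgn' v).1 (hBgn' v).2),
          lt_of_lt_of_le (rank_lt_card (hadm w v)) (hC _)⟩),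
       fun c => w.1 (⟨c.1.1, (hFrn c).1⟩, ⟨c.1.2, (hFrn c).2⟩)) with hfdef
    have hinj : Function.Injective f := by
      intro w w' he
      have he1 : ∀ v : ↥Bg, (f w).1 v = (f w').1 v := fun v =>
        congrFun (congrArg Prod.fst he) v
      have he2 : ∀ c : ↥Fr, (f w).2 c = (f w').2 c := fun c =>
        congrFun (congrArg Prod.snd he) c
      apply Subtype.ext
      funext c
      by_cases hc : vm (c.1.val, c.2.val) ∈ Bg
      · -- forced cell
        set v : ↥Bg := ⟨vm (c.1.val, c.2.val), hc⟩ with hvdef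
        have hp := he1 v
        simp only [hfdef] at hp
        have hbot : (fun i => (blockPat w.1 v.1 (hBgn' v).1 (hBgn' v).2 (i, ⟨0, hℓ0⟩)).1)
            = (fun i => (blockPat w'.1 v.1 (hBgn' v).1 (hBgn' v).2 (i, ⟨0, hℓ0⟩)).1) :=
          congrArg Prod.fst hp
        have hrank : rank Xh hℓ0 (blockPat w.1 v.1 (hBgn' v).1 (hBgn' v).2)
            = rank Xh hℓ0 (blockPat w'.1 v.1 (hBgn' v).1 (hBgn' v).2) := by
          have := congrArg Prod.snd hp
          exact congrArg Fin.val this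
        have hp' := hadm w' v
        rw [← hbot] at hp'
        have hpe : blockPat w.1 v.1 (hBgn' v).1 (hBgn' v).2
            = blockPat w'.1 v.1 (hBgn' v).1 (hBgn' v).2 :=
          rank_inj (hadm w v) hp' hrank
        -- evaluate at the residue of c
        have hm1 : c.1.val % ℓ < ℓ := Nat.mod_lt _ hℓ0
        have hm2 : c.2.val % ℓ < ℓ := Nat.mod_lt _ hℓ0
        have key := congrFun hpe (⟨c.1.val % ℓ, hm1⟩, ⟨c.2.val % ℓ, hm2⟩)
        simp only [blockPat] at key
        have ev1 : vmapN ℓ c.1.val + c.1.val % ℓ = c.1.val := vmapN_le hℓ0 c.1.val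
        have ev2 : vmapN ℓ c.2.val + c.2.val % ℓ = c.2.val := vmapN_le hℓ0 c.2.val
        have hc1 : c = ((⟨v.1.1 + c.1.val % ℓ, by have := c.1.isLt; simp [hvdef, hvm]; omega⟩ : Fin n),
            (⟨v.1.2 + c.2.val % ℓ, by have := c.2.isLt; simp [hvdef, hvm]; omega⟩ : Fin n)) := by
          refine Prod.ext ?_ ?_ <;> apply Fin.ext <;> simp [hvdef, hvm] <;> omega
        rw [hc1]
        exact key
      · -- free cell
        have hcF : (c.1.val, c.2.val) ∈ Fr := by
          rw [hFrdef]
          refine Finset.mem_filter.2 ⟨?_, hc⟩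
          exact Finset.mem_product.2 ⟨Finset.mem_range.2 c.1.isLt, Finset.mem_range.2 c.2.isLt⟩
        have key := he2 ⟨(c.1.val, c.2.val), hcF⟩
        simp only [hfdef] at key
        have hc1 : c = ((⟨c.1.val, c.1.isLt⟩ : Fin n), (⟨c.2.val, c.2.isLt⟩ : Fin n)) := by
          refine Prod.ext ?_ ?_ <;> apply Fin.ext <;> rfl
        rw [hc1]
        exact key
    calc Nat.card (EType Atil C n ℓ Xh S)
        ≤ Nat.card ((↥Bg → (Fin ℓ → Atil) × Fin Cl) × (↥Fr → Atil × C)) :=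
          Nat.card_le_card_of_injective f hinj
      _ = (Fintype.card Atil ^ ℓ * Cl) ^ Bg.card * Fintype.card (Atil × C) ^ Fr.card := by
          simp [Nat.card_eq_fintype_card, Fintype.card_fun, Fintype.card_coe]

end Stmt19

/-- Counting bound via the relative complexity function. Let `X̂` be a
`ℤ²`-subshift over the product alphabet `Â = Ã × C`, let `Cl` bound the
number of globally admissible `ℓ × ℓ` patterns of `X̂` lying over any given
bottom-row word `w̃ ∈ Ã^ℓ` (relative complexity), let `S ⊆ [0, n-2ℓ]²` have
`card S ≥ n²(1-ε)`, and let
`Ê = {w ∈ Â^{[1,n]²} : ∀ u ∈ S, σᵘ(w)|_{[1,2ℓ]²} ∈ L(X̂, 2ℓ)}`.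
Then `(1/n²)·log card Ê ≤ (1/ℓ)·log card Ã + (1/ℓ²)·log Cl + ε·log card Â`. -/
theorem stmt_19 {Atil C : Type*} [Fintype Atil] [Fintype C]
    [TopologicalSpace Atil] [DiscreteTopology Atil]
    [TopologicalSpace C] [DiscreteTopology C]
    {n ℓ : ℕ} (hℓ : 1 < ℓ) (hn : 2 * ℓ < n)
    (ε : ℝ) (hε0 : 0 < ε) (hε1 : ε < 1)
    (Xh : Set (Config2 (Atil × C)))
    (hXclosed : IsClosed Xh)
    (hXinv : ∀ u : ℤ × ℤ, shiftC u '' Xh = Xh)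
    (S : Finset (ℕ × ℕ))
    (hS : ∀ u ∈ S, u.1 + 2 * ℓ ≤ n ∧ u.2 + 2 * ℓ ≤ n)
    (hScard : (n : ℝ) ^ 2 * (1 - ε) ≤ S.card)
    (Cl : ℕ)
    (hC : ∀ wt : Fin ℓ → Atil,
      Nat.card {p : (Fin ℓ × Fin ℓ) → Atil × C //
        (∃ x ∈ Xh, patternAt x = p) ∧
        ∀ i : Fin ℓ, (p (i, ⟨0, by omega⟩)).1 = wt i} ≤ Cl) :
    Real.log (Nat.card {w : (Fin n × Fin n) → Atil × C //
        ∀ u ∈ S, ∀ (h1 : u.1 + 2 * ℓ ≤ n) (h2 : u.2 + 2 * ℓ ≤ n),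
          ∃ x ∈ Xh, ∀ q : Fin (2 * ℓ) × Fin (2 * ℓ),
            x ((q.1 : ℤ) + 1, (q.2 : ℤ) + 1) =
              w (⟨u.1 + q.1, by omega⟩, ⟨u.2 + q.2, by omega⟩)}) / (n : ℝ) ^ 2 ≤
      (1 / (ℓ : ℝ)) * Real.log (Fintype.card Atil) +
        (1 / (ℓ : ℝ) ^ 2) * Real.log Cl +
        ε * Real.log (Fintype.card (Atil × C)) := by
  classical
  have hℓ0 : 0 < ℓ := by omega
  have hn0 : 0 < n := by omega
  have hlognn : ∀ m : ℕ, 0 ≤ Real.log m := by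
    intro m
    rcases Nat.eq_zero_or_pos m with h | h
    · simp [h]
    · exact Real.log_nonneg (by exact_mod_cast h)
  show Real.log (Nat.card (Stmt19.EType Atil C n ℓ Xh S)) / (n : ℝ) ^ 2 ≤
      (1 / (ℓ : ℝ)) * Real.log (Fintype.card Atil) +
        (1 / (ℓ : ℝ) ^ 2) * Real.log Cl +
        ε * Real.log (Fintype.card (Atil × C))
  rcases isEmpty_or_nonempty (Stmt19.EType Atil C n ℓ Xh S) with hE | hNE
  · rw [Nat.card_of_isEmpty]
    simp only [Nat.cast_zero, Real.log_zero, zero_div]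
    have h1 : 0 ≤ (1 / (ℓ : ℝ)) * Real.log (Fintype.card Atil) :=
      mul_nonneg (by positivity) (hlognn _)
    have h2 : 0 ≤ (1 / (ℓ : ℝ) ^ 2) * Real.log Cl := mul_nonneg (by positivity) (hlognn _)
    have h3 : 0 ≤ ε * Real.log (Fintype.card (Atil × C)) := mul_nonneg hε0.le (hlognn _)
    linarith
  · obtain ⟨w₀⟩ := hNE
    haveI : Nonempty (Stmt19.EType Atil C n ℓ Xh S) := ⟨w₀⟩
    have hSne : S.Nonempty := by
      rw [← Finset.card_pos]
      by_contra h
      have hc0 : (S.card : ℝ) = 0 := by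
        have : S.card = 0 := by omega
        simp [this]
      have key : (0:ℝ) < (n:ℝ)^2 * (1-ε) :=
        mul_pos (by positivity) (by linarith)
      linarith [hScard]
    obtain ⟨u₀, hu₀⟩ := hSne
    obtain ⟨hu1, hu2⟩ := hS u₀ hu₀
    obtain ⟨x₀, hx₀, -⟩ := w₀.2 u₀ hu₀ hu1 hu2
    have hfib : ∀ wt : Fin ℓ → Atil, (Stmt19.fib Xh hℓ0 wt).card ≤ Cl := by
      intro wt
      calc (Stmt19.fib Xh hℓ0 wt).card
          = Nat.card {p // p ∈ Stmt19.fib Xh hℓ0 wt} := by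
            rw [Nat.card_eq_fintype_card, Fintype.card_coe]
        _ = Nat.card {p : (Fin ℓ × Fin ℓ) → Atil × C //
              (∃ x ∈ Xh, patternAt x = p) ∧
              ∀ i : Fin ℓ, (p (i, ⟨0, hℓ0⟩)).1 = wt i} :=
            Nat.card_congr (Equiv.subtypeEquivRight fun p => Stmt19.mem_fib)
        _ ≤ Cl := hC wt
    have hCl : 0 < Cl := by
      have hadm0 : ∃ x ∈ Xh, patternAt x = (patternAt x₀ : (Fin ℓ × Fin ℓ) → Atil × C) :=
        ⟨x₀, hx₀, rfl⟩
      have hp := Stmt19.mem_fib_self (hℓ0 := hℓ0) hadm0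
      exact lt_of_lt_of_le (Finset.card_pos.2 ⟨_, hp⟩) (hfib _)
    obtain ⟨B, F, h1, h2, h3⟩ := Stmt19.card_EType_le hℓ0 hn hXinv hS hCl hfib
    have hAne : Nonempty (Atil × C) := ⟨w₀.1 (⟨0, hn0⟩, ⟨0, hn0⟩)⟩
    have ha : 0 < Fintype.card Atil := Fintype.card_pos_iff.2 ⟨hAne.some.1⟩
    have hb : 0 < Fintype.card (Atil × C) := Fintype.card_pos_iff.2 hAne
    have hW1 : 0 < Nat.card (Stmt19.EType Atil C n ℓ Xh S) := Nat.card_pos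
    have ha' : (0:ℝ) < (Fintype.card Atil : ℝ) := by exact_mod_cast ha
    have hb' : (0:ℝ) < (Fintype.card (Atil × C) : ℝ) := by exact_mod_cast hb
    have hCl' : (0:ℝ) < (Cl : ℝ) := by exact_mod_cast hCl
    have hℓ' : (0:ℝ) < (ℓ : ℝ) := by exact_mod_cast hℓ0
    have hn' : (0:ℝ) < (n : ℝ) := by exact_mod_cast hn0
    have hx1 : ((Fintype.card Atil : ℝ) ^ ℓ * Cl) ≠ 0 :=
      ne_of_gt (mul_pos (pow_pos ha' ℓ) hCl')
    have hlog : Real.log (Nat.card (Stmt19.EType Atil C n ℓ Xh S)) ≤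
        (B : ℝ) * ((ℓ : ℝ) * Real.log (Fintype.card Atil) + Real.log Cl)
          + (F : ℝ) * Real.log (Fintype.card (Atil × C)) := by
      have hc3 : ((Nat.card (Stmt19.EType Atil C n ℓ Xh S) : ℕ) : ℝ) ≤
          (((Fintype.card Atil ^ ℓ * Cl) ^ B * Fintype.card (Atil × C) ^ F : ℕ) : ℝ) := by
        exact_mod_cast h3
      calc Real.log (Nat.card (Stmt19.EType Atil C n ℓ Xh S))
          ≤ Real.log (((Fintype.card Atil ^ ℓ * Cl) ^ B * Fintype.card (Atil × C) ^ F : ℕ)) :=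
            Real.log_le_log (by exact_mod_cast hW1) hc3
        _ = (B : ℝ) * ((ℓ : ℝ) * Real.log (Fintype.card Atil) + Real.log Cl)
              + (F : ℝ) * Real.log (Fintype.card (Atil × C)) := by
            push_cast
            rw [Real.log_mul (pow_ne_zero _ hx1) (pow_ne_zero _ hb'.ne'),
              Real.log_pow, Real.log_pow, Real.log_mul (pow_ne_zero _ ha'.ne') hCl'.ne',
              Real.log_pow]
            try ring
    rw [div_le_iff₀ (by positivity : (0:ℝ) < (n:ℝ)^2)]
    have hBl : (ℓ:ℝ) * ℓ * B ≤ (n:ℝ)^2 := by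
      have hh : ℓ*ℓ*B ≤ n*n := le_trans (Nat.le_add_right _ _) h2
      have hh' := (Nat.cast_le (α := ℝ)).2 hh
      push_cast at hh'
      nlinarith [hh']
    have hF : (F:ℝ) ≤ ε * (n:ℝ)^2 := by
      have hs := (Nat.cast_le (α := ℝ)).2 h1
      have h2' := (Nat.cast_le (α := ℝ)).2 h2
      push_cast at hs h2'
      nlinarith [hScard, hs, h2']
    have hla := hlognn (Fintype.card Atil)
    have hlc := hlognn Cl
    have hlb := hlognn (Fintype.card (Atil × C))
    calc Real.log (Nat.card (Stmt19.EType Atil C n ℓ Xh S))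
        ≤ (B : ℝ) * ((ℓ : ℝ) * Real.log (Fintype.card Atil) + Real.log Cl)
          + (F : ℝ) * Real.log (Fintype.card (Atil × C)) := hlog
      _ = ((B:ℝ) * ℓ) * Real.log (Fintype.card Atil) + (B:ℝ) * Real.log Cl
          + (F:ℝ) * Real.log (Fintype.card (Atil × C)) := by ring
      _ ≤ ((n:ℝ)^2/ℓ) * Real.log (Fintype.card Atil) + ((n:ℝ)^2/ℓ^2) * Real.log Cl
          + (ε * (n:ℝ)^2) * Real.log (Fintype.card (Atil × C)) := by
          have b1 : (B:ℝ) * ℓ ≤ (n:ℝ)^2/ℓ := by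
            rw [le_div_iff₀ hℓ']
            calc (B:ℝ) * ℓ * ℓ = (ℓ:ℝ) * ℓ * B := by ring
              _ ≤ (n:ℝ)^2 := hBl
          have b2 : (B:ℝ) ≤ (n:ℝ)^2/ℓ^2 := by
            rw [le_div_iff₀ (by positivity : (0:ℝ) < (ℓ:ℝ)^2)]
            calc (B:ℝ) * ℓ^2 = (ℓ:ℝ) * ℓ * B := by ring
              _ ≤ (n:ℝ)^2 := hBl
          exact add_le_add (add_le_add (mul_le_mul_of_nonneg_right b1 hla)
            (mul_le_mul_of_nonneg_right b2 hlc)) (mul_le_mul_of_nonneg_right hF hlb)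
      _ = ((1/(ℓ:ℝ)) * Real.log (Fintype.card Atil) + (1/(ℓ:ℝ)^2) * Real.log Cl
          + ε * Real.log (Fintype.card (Atil × C))) * (n:ℝ)^2 := by
          field_simp
end
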